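/- Let G^{[ℓ(v):=l]} denote the graph obtained from G by changing the label of vertex v to l (with G^{[ℓ(v):=l]} = G if v is not a vertex of G). For every bad vertex v of a finite Σ°-labeled graph G and every label l ∈ Σ°: if G ⇒ H is a PBPO+ rewrite step via a rule encoding ρ° of a linear term rewrite rule ρ with adherence morphism α, then G^{[ℓ(v):=l]} ⇒ H^{[ℓ(v):=l]} is a PBPO+ rewrite step via ρ° with adherence morphism α. -/

import Mathlib

open CategoryTheory
open Classical

noncomputable section

/-- Labeled graphs over a label type `W`. -/
structure LGraph (W : Type) : Type 1 where
  V : Type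
  E : Type
  src : E → V
  tgt : E → V
  lV : V → W
  lE : E → W

section Cat

variable {W : Type} [Preorder W]

/-- Label-nondecreasing graph premorphisms: the morphisms of the category `Graph^(L,≤)`. -/
structure GLHom (G H : LGraph W) : Type where
  onV : G.V → H.V
  onE : G.E → H.E
  src_comm : ∀ e, H.src (onE e) = onV (G.src e)
  tgt_comm : ∀ e, H.tgt (onE e) = onV (G.tgt e)
  lV_le : ∀ v, G.lV v ≤ H.lV (onV v)
  lE_le : ∀ e, G.lE e ≤ H.lE (onE e)

theorem GLHom.ext' {G H : LGraph W} {f g : GLHom G H}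
    (h1 : f.onV = g.onV) (h2 : f.onE = g.onE) : f = g := by
  cases f; cases g
  cases h1; cases h2
  rfl

/-- The category `Graph^(L,≤)` of labeled graphs over a preordered label set. -/
instance : Category (LGraph W) where
  Hom G H := GLHom G H
  id G := { onV := id, onE := id, src_comm := fun _ => rfl, tgt_comm := fun _ => rfl,
            lV_le := fun _ => le_refl _, lE_le := fun _ => le_refl _ }
  comp f g :=
    { onV := g.onV ∘ f.onV
      onE := g.onE ∘ f.onE
      src_comm := fun e => by
        simp only [Function.comp_apply, g.src_comm, f.src_comm]
      tgt_comm := fun e => by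
        simp only [Function.comp_apply, g.tgt_comm, f.tgt_comm]
      lV_le := fun v => le_trans (f.lV_le v) (g.lV_le _)
      lE_le := fun e => le_trans (f.lE_le e) (g.lE_le _) }
  id_comp f := GLHom.ext' rfl rfl
  comp_id f := GLHom.ext' rfl rfl
  assoc f g h := GLHom.ext' rfl rfl

/-- Vertex map of a morphism. -/
abbrev homV {G H : LGraph W} (f : G ⟶ H) : G.V → H.V := GLHom.onV f

/-- Edge map of a morphism. -/
abbrev homE {G H : LGraph W} (f : G ⟶ H) : G.E → H.E := GLHom.onE f

end Cat

/-- A graph is finite if it has finitely many vertices and edges. -/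
def FiniteG {W : Type} (G : LGraph W) : Prop := Finite G.V ∧ Finite G.E
/-- The flat lattice on a base label set `A`: a global minimum `⊥`, a global
maximum `⊤`, and all elements of `A` pairwise incomparable. -/
inductive Flat (A : Type) : Type
  | bot : Flat A
  | el : A → Flat A
  | top : Flat A

namespace Flat

def le {A : Type} : Flat A → Flat A → Prop
  | bot, _ => True
  | _, top => True
  | el a, el b => a = b
  | _, _ => False

instance (A : Type) : Preorder (Flat A) where
  le := Flat.le
  le_refl a := by cases a <;> trivial
  le_trans a b c hab hbc := by
    cases a <;> cases b <;> cases c <;> simp_all [Flat.le]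

theorem bot_le {A : Type} (a : Flat A) : (Flat.bot : Flat A) ≤ a := by
  show Flat.le Flat.bot a
  cases a <;> trivial

theorem le_top {A : Type} (a : Flat A) : a ≤ (Flat.top : Flat A) := by
  show Flat.le a Flat.top
  cases a <;> trivial

theorem le_cases {A : Type} {a b : Flat A} (h : a = Flat.bot ∨ b = Flat.top) : a ≤ b := by
  rcases h with h | h
  · subst h; exact bot_le _
  · subst h; exact le_top _

end Flat

/-- The flat lattice `Σ°` induced by a signature `S` together with the
positive natural numbers (used as edge labels). -/
abbrev FlatL (S : Type) := Flat (S ⊕ ℕ+)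
/-- First-order terms over a signature `S` with arity function `ar` and
variable set `X`. -/
inductive Term (S : Type) (ar : S → ℕ) (X : Type) : Type
  | var : X → Term S ar X
  | app : (f : S) → (Fin (ar f) → Term S ar X) → Term S ar X

namespace Term

variable {S : Type} {ar : S → ℕ} {X : Type}

/-- The subterm of `t` at a position (a list of (0-based) child indices),
if the position exists in `t`. -/
def sub? : Term S ar X → List ℕ → Option (Term S ar X)
  | t, [] => some t
  | .var _, _ :: _ => none
  | .app f ts, i :: p => if h : i < ar f then sub? (ts ⟨i, h⟩) p else none

/-- The set of variables occurring in a term. -/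
def vars (t : Term S ar X) : Set X := {x | ∃ p, t.sub? p = some (.var x)}

/-- A term is linear if every variable occurs at most once in it. -/
def Linear (t : Term S ar X) : Prop :=
  ∀ x p q, t.sub? p = some (.var x) → t.sub? q = some (.var x) → p = q

/-- The head symbol of a term, if any. -/
def head? : Term S ar X → Option S
  | .var _ => none
  | .app f _ => some f

/-- The function symbol at position `p` of `t`, if any. -/
def symAt (t : Term S ar X) (p : List ℕ) : Option S := (t.sub? p).bind head?

theorem sub?_append (t : Term S ar X) (p q : List ℕ) :
    t.sub? (p ++ q) = (t.sub? p).bind (fun s => s.sub? q) := by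
  induction p generalizing t with
  | nil => simp [sub?]
  | cons i p ih =>
    cases t with
    | var x => simp [sub?]
    | app f ts =>
      show sub? (.app f ts) (i :: (p ++ q)) = _
      simp only [sub?]
      by_cases h : i < ar f
      · simp [h, ih]
      · simp [h]

theorem symAt_sub (t : Term S ar X) {p : List ℕ} {f : S} (h : t.symAt p = some f) :
    ∃ ts : Fin (ar f) → Term S ar X, t.sub? p = some (.app f ts) := by
  unfold symAt at h
  cases hs : t.sub? p with
  | none => rw [hs] at h; simp at h
  | some s =>
    rw [hs] at h
    cases s with
    | var x => simp [head?] at h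
    | app g ts =>
      simp [head?] at h
      subst h
      exact ⟨ts, rfl⟩

theorem edge_sub?_isSome (t : Term S ar X) {p : List ℕ} {i : ℕ}
    (h : ∃ f, t.symAt p = some f ∧ i < ar f) :
    ∃ s, t.sub? (p ++ [i]) = some s := by
  obtain ⟨f, hf, hi⟩ := h
  obtain ⟨ts, hts⟩ := t.symAt_sub hf
  refine ⟨ts ⟨i, hi⟩, ?_⟩
  rw [sub?_append, hts]
  simp [sub?, hi]

theorem edge_tgt_var (t : Term S ar X) {p : List ℕ} {i : ℕ}
    (h : ∃ f, t.symAt p = some f ∧ i < ar f)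
    (hn : ¬ (t.symAt (p ++ [i])).isSome) :
    ∃ x, t.sub? (p ++ [i]) = some (.var x) := by
  obtain ⟨s, hs⟩ := t.edge_sub?_isSome h
  cases s with
  | var x => exact ⟨x, hs⟩
  | app g ts => exact absurd (by simp [symAt, hs, head?]) hn

theorem root_var (t : Term S ar X) (h : ¬ (t.symAt []).isSome) :
    ∃ x, t.sub? [] = some (.var x) := by
  cases t with
  | var x => exact ⟨x, rfl⟩
  | app f ts => exact absurd (by simp [symAt, sub?, head?]) h

/-- Vertices of the term encoding: symbol vertices (named by their position)
and variable heads (named by their variable). -/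
def encV (t : Term S ar X) : Type :=
  {p : List ℕ // (t.symAt p).isSome} ⊕ {x : X // x ∈ t.vars}

/-- Edges of the term encoding: pairs of a symbol position and a child index. -/
def encE (t : Term S ar X) : Type :=
  {pi : List ℕ × ℕ // ∃ f, t.symAt pi.1 = some f ∧ pi.2 < ar f}

/-- Target of an edge of the term encoding. -/
noncomputable def encTgt (t : Term S ar X) (e : t.encE) : t.encV :=
  if h : (t.symAt (e.1.1 ++ [e.1.2])).isSome then Sum.inl ⟨e.1.1 ++ [e.1.2], h⟩
  else Sum.inr ⟨Classical.choose (t.edge_tgt_var e.2 h),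
    ⟨e.1.1 ++ [e.1.2], Classical.choose_spec (t.edge_tgt_var e.2 h)⟩⟩

/-- The term encoding `t°` of a term `t` as a `Σ°`-labeled graph. -/
noncomputable def enc (t : Term S ar X) : LGraph (FlatL S) where
  V := t.encV
  E := t.encE
  src e := Sum.inl ⟨e.1.1, by obtain ⟨f, hf, _⟩ := e.2; simp [hf]⟩
  tgt := t.encTgt
  lV v := match v with
    | .inl q => (t.symAt q.1).elim Flat.bot (fun f => Flat.el (Sum.inl f))
    | .inr _ => Flat.bot
  lE e := Flat.el (Sum.inr ⟨e.1.2 + 1, Nat.succ_pos _⟩)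

/-- The root of the term encoding (the vertex at position `ε`). -/
noncomputable def encRoot (t : Term S ar X) : t.encV :=
  if h : (t.symAt []).isSome then Sum.inl ⟨[], h⟩
  else Sum.inr ⟨Classical.choose (t.root_var h), ⟨[], Classical.choose_spec (t.root_var h)⟩⟩

/-- `t.encVertAt p v` says that `v` is the vertex at position `p` in the term
encoding `t°`. -/
def encVertAt (t : Term S ar X) (p : List ℕ) : t.encV → Prop
  | .inl q => q.1 = p
  | .inr x => t.sub? p = some (.var x.1)

/-- The set of variable heads of a term encoding. -/
def varHeads (t : Term S ar X) : Set t.encV := Set.range Sum.inr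

/-- Applying a substitution to a term. -/
def subst (σ : X → Term S ar X) : Term S ar X → Term S ar X
  | .var x => σ x
  | .app f ts => .app f (fun i => subst σ (ts i))

end Term

/-- One-hole contexts over a signature. `app f i ts C` is the context
`f(ts 0, …, C, …, ts (n-1))` with `C` at argument position `i`. -/
inductive Ctx (S : Type) (ar : S → ℕ) (X : Type) : Type
  | hole : Ctx S ar X
  | app : (f : S) → (i : Fin (ar f)) → (Fin (ar f) → Term S ar X) → Ctx S ar X → Ctx S ar X

namespace Ctx

variable {S : Type} {ar : S → ℕ} {X : Type}

/-- Replacing the hole of a context by a term. -/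
def fill : Ctx S ar X → Term S ar X → Term S ar X
  | .hole, t => t
  | .app f i ts C, t => .app f (Function.update ts i (C.fill t))

/-- The position of the hole of a context. -/
def holePos : Ctx S ar X → List ℕ
  | .hole => []
  | .app _ i _ C => (i : ℕ) :: C.holePos

end Ctx

/-- A term rewrite rule `lhs → rhs`: `lhs` is not a variable and all variables
of `rhs` occur in `lhs`. -/
structure TRSRule (S : Type) (ar : S → ℕ) (X : Type) : Type where
  lhs : Term S ar X
  rhs : Term S ar X
  lhs_not_var : ∀ x, lhs ≠ Term.var x
  var_cond : rhs.vars ⊆ lhs.vars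

namespace TRSRule

variable {S : Type} {ar : S → ℕ} {X : Type}

/-- A rule is linear if both sides are linear terms. -/
def Linear (ρ : TRSRule S ar X) : Prop := ρ.lhs.Linear ∧ ρ.rhs.Linear

/-- The rewrite step relation generated by a single rule. -/
def Step (ρ : TRSRule S ar X) (s t : Term S ar X) : Prop :=
  ∃ (C : Ctx S ar X) (σ : X → Term S ar X),
    s = C.fill (ρ.lhs.subst σ) ∧ t = C.fill (ρ.rhs.subst σ)

/-- The rewrite step relation of a rule at a fixed position `p`. -/
def StepAt (ρ : TRSRule S ar X) (p : List ℕ) (s t : Term S ar X) : Prop :=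
  ∃ (C : Ctx S ar X) (σ : X → Term S ar X),
    C.holePos = p ∧ s = C.fill (ρ.lhs.subst σ) ∧ t = C.fill (ρ.rhs.subst σ)

end TRSRule

/-- The rewrite relation of a term rewriting system. -/
def TStep {S : Type} {ar : S → ℕ} {X : Type} (Rs : Set (TRSRule S ar X))
    (s t : Term S ar X) : Prop :=
  ∃ ρ ∈ Rs, ρ.Step s t
section Closures

variable {A : Type}

/-- Upper context closure `C[G]` of a graph rooted at `r`: adds a `⊤`-labeled
context vertex with a `⊤`-labeled edge to the root and a `⊤`-labeled loop. -/
def upperCC (G : LGraph (Flat A)) (r : G.V) : LGraph (Flat A) where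
  V := G.V ⊕ Unit
  E := G.E ⊕ Bool
  src e := match e with
    | .inl e => .inl (G.src e)
    | .inr _ => .inr ()
  tgt e := match e with
    | .inl e => .inl (G.tgt e)
    | .inr true => .inl r
    | .inr false => .inr ()
  lV v := match v with
    | .inl v => G.lV v
    | .inr _ => Flat.top
  lE e := match e with
    | .inl e => G.lE e
    | .inr _ => Flat.top

/-- Lower context closure `G↓_Xs`: relabels every vertex in `Xs` to `⊤` and
adds for it a fresh `⊤`-labeled vertex `x'` with a `⊤`-labeled edge `x → x'`
and a `⊤`-labeled loop on `x'`. -/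
noncomputable def lowerCC (G : LGraph (Flat A)) (Xs : Set G.V) : LGraph (Flat A) where
  V := G.V ⊕ Xs
  E := G.E ⊕ (Xs ⊕ Xs)
  src e := match e with
    | .inl e => .inl (G.src e)
    | .inr (.inl x) => .inl x.1
    | .inr (.inr x) => .inr x
  tgt e := match e with
    | .inl e => .inl (G.tgt e)
    | .inr (.inl x) => .inr x
    | .inr (.inr x) => .inr x
  lV v := match v with
    | .inl v => if v ∈ Xs then Flat.top else G.lV v
    | .inr _ => Flat.top
  lE e := match e with
    | .inl e => G.lE e
    | .inr _ => Flat.top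

/-- The context closure `C[G↓_Xs]` of a rooted graph. -/
noncomputable def ctxCC (G : LGraph (Flat A)) (r : G.V) (Xs : Set G.V) : LGraph (Flat A) :=
  upperCC (lowerCC G Xs) (Sum.inl r)

theorem ctxCC_lV_inl (G : LGraph (Flat A)) (r : G.V) (Xs : Set G.V) (v : G.V) :
    (ctxCC G r Xs).lV (Sum.inl (Sum.inl v)) = if v ∈ Xs then Flat.top else G.lV v := rfl

/-- The typing morphism `G ↣ C[G↓_Xs]` (an inclusion). -/
noncomputable def tCC (G : LGraph (Flat A)) (r : G.V) (Xs : Set G.V) :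
    GLHom G (ctxCC G r Xs) where
  onV v := Sum.inl (Sum.inl v)
  onE e := Sum.inl (Sum.inl e)
  src_comm e := rfl
  tgt_comm e := rfl
  lV_le v := by
    rw [ctxCC_lV_inl]
    split
    · exact Flat.le_top _
    · exact le_refl _
  lE_le e := le_refl _

end Closures

/-- The interface graph `I(t)` of a term `t`: a discrete graph with
`⊥`-labeled vertices `Var(t) ∪ {ε}`. -/
def interfaceG {S : Type} {ar : S → ℕ} {X : Type} (t : Term S ar X) : LGraph (FlatL S) where
  V := {x : X // x ∈ t.vars} ⊕ Unit
  E := Empty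
  src e := e.elim
  tgt e := e.elim
  lV _ := Flat.bot
  lE e := e.elim

/-- The variable vertices of an interface graph. -/
def interfaceVars {S : Type} {ar : S → ℕ} {X : Type} (t : Term S ar X) :
    Set (interfaceG t).V := Set.range Sum.inl
/-- A PBPO⁺ rewrite rule. -/
structure PBPORule (W : Type) [Preorder W] : Type 1 where
  L : LGraph W
  K : LGraph W
  R : LGraph W
  L' : LGraph W
  K' : LGraph W
  l : K ⟶ L
  r : K ⟶ R
  l' : K' ⟶ L'
  tL : L ⟶ L'
  tK : K ⟶ K'

/-- A PBPO⁺ rewrite step `G_L ⇒_ρ^α G_R`, consisting of a monic match `m`, an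
adherence morphism `α` making the match square a pullback, the pullback `G_K`
of `α` along `l'`, and the pushout `G_R` of `r` along `u`. -/
structure RewriteStep {W : Type} [Preorder W] (ρ : PBPORule W) (G₀ G₁ : LGraph W) :
    Type 1 where
  m : ρ.L ⟶ G₀
  mono_m : Mono m
  α : G₀ ⟶ ρ.L'
  matchPB : IsPullback (𝟙 ρ.L) m ρ.tL α
  GK : LGraph W
  gL : GK ⟶ G₀
  u' : GK ⟶ ρ.K'
  pbK : IsPullback gL u' α ρ.l'
  u : ρ.K ⟶ GK
  u_u' : u ≫ u' = ρ.tK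
  u_gL : u ≫ gL = ρ.l ≫ m
  w : ρ.R ⟶ G₁
  gR : GK ⟶ G₁
  po : IsPushout ρ.r u w gR

/-- `G ⇒_ρ H` : there exists a PBPO⁺ rewrite step from `G` to `H` via `ρ`. -/
def PBPOStep {W : Type} [Preorder W] (ρ : PBPORule W) (G H : LGraph W) : Prop :=
  Nonempty (RewriteStep ρ G H)

/-- A match `m` establishes a match (of the rule `ρ`) if it is monic and some
adherence morphism makes the match square a pullback. -/
def EstablishesMatch {W : Type} [Preorder W] (ρ : PBPORule W) {G : LGraph W}
    (m : ρ.L ⟶ G) : Prop :=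
  Mono m ∧ ∃ α : G ⟶ ρ.L', m ≫ α = ρ.tL ∧ IsPullback (𝟙 ρ.L) m ρ.tL α

section RuleEnc

variable {S : Type} {ar : S → ℕ} {X : Type}

/-- The morphism `l : K → L` of the rule encoding. -/
noncomputable def encKtoL (ρ : TRSRule S ar X) : GLHom (interfaceG ρ.rhs) ρ.lhs.enc where
  onV v := match v with
    | .inl x => Sum.inr ⟨x.1, ρ.var_cond x.2⟩
    | .inr _ => ρ.lhs.encRoot
  onE e := e.elim
  src_comm e := e.elim
  tgt_comm e := e.elim
  lV_le v := by cases v <;> exact Flat.bot_le _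
  lE_le e := e.elim

/-- The morphism `r : K → R` of the rule encoding. -/
noncomputable def encKtoR (ρ : TRSRule S ar X) : GLHom (interfaceG ρ.rhs) ρ.rhs.enc where
  onV v := match v with
    | .inl x => Sum.inr x
    | .inr _ => ρ.rhs.encRoot
  onE e := e.elim
  src_comm e := e.elim
  tgt_comm e := e.elim
  lV_le v := by cases v <;> exact Flat.bot_le _
  lE_le e := e.elim

/-- Mapping the primed (lower-closure) vertices of `K'` to those of `L'`. -/
noncomputable def mapPrime (ρ : TRSRule S ar X) :
    ↥(interfaceVars ρ.rhs) → ↥(ρ.lhs.varHeads) :=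
  fun x' => match x' with
  | ⟨.inl x, _⟩ => ⟨Sum.inr ⟨x.1, ρ.var_cond x.2⟩, ⟨⟨x.1, ρ.var_cond x.2⟩, rfl⟩⟩
  | ⟨.inr u, h⟩ => absurd h (by rintro ⟨y, hy⟩; cases hy)

/-- The morphism `l' : K' → L'` of the rule encoding. -/
noncomputable def encl' (ρ : TRSRule S ar X) :
    GLHom (ctxCC (interfaceG ρ.rhs) (Sum.inr ()) (interfaceVars ρ.rhs))
      (ctxCC ρ.lhs.enc ρ.lhs.encRoot ρ.lhs.varHeads) where
  onV v := match v with
    | .inl (.inl (.inl x)) => .inl (.inl (Sum.inr ⟨x.1, ρ.var_cond x.2⟩))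
    | .inl (.inl (.inr _)) => .inl (.inl ρ.lhs.encRoot)
    | .inl (.inr x') => .inl (.inr (mapPrime ρ x'))
    | .inr u => .inr u
  onE e := match e with
    | .inl (.inl e) => e.elim
    | .inl (.inr (.inl x')) => .inl (.inr (.inl (mapPrime ρ x')))
    | .inl (.inr (.inr x')) => .inl (.inr (.inr (mapPrime ρ x')))
    | .inr b => .inr b
  src_comm := by
    rintro ((e | (⟨(x | u), hv⟩ | ⟨(x | u), hv⟩)) | b)
    · exact e.elim
    · rfl
    · exact absurd hv (by rintro ⟨y, hy⟩; cases hy)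
    · rfl
    · exact absurd hv (by rintro ⟨y, hy⟩; cases hy)
    · rfl
  tgt_comm := by
    rintro ((e | (x' | x')) | b)
    · exact e.elim
    · rfl
    · rfl
    · cases b <;> rfl
  lV_le := by
    rintro (((x | u) | x') | c)
    · refine Flat.le_cases (Or.inr ?_)
      refine (ctxCC_lV_inl ρ.lhs.enc ρ.lhs.encRoot ρ.lhs.varHeads
        (Sum.inr ⟨x.1, ρ.var_cond x.2⟩)).trans ?_
      rw [if_pos ⟨⟨x.1, ρ.var_cond x.2⟩, rfl⟩]
    · refine Flat.le_cases (Or.inl ?_)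
      refine (ctxCC_lV_inl (interfaceG ρ.rhs) (Sum.inr ()) (interfaceVars ρ.rhs)
        (Sum.inr u)).trans ?_
      rw [if_neg (by rintro ⟨y, hy⟩; cases hy)]
      rfl
    · exact Flat.le_cases (Or.inr rfl)
    · exact Flat.le_cases (Or.inr rfl)
  lE_le := by
    rintro ((e | (x' | x')) | b)
    · exact e.elim
    · exact Flat.le_cases (Or.inr rfl)
    · exact Flat.le_cases (Or.inr rfl)
    · exact Flat.le_cases (Or.inr rfl)

/-- The rule encoding `ρ°` of a term rewrite rule `ρ : l → r` as a PBPO⁺ rule. -/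
noncomputable def ruleEnc (ρ : TRSRule S ar X) : PBPORule (FlatL S) where
  L := ρ.lhs.enc
  K := interfaceG ρ.rhs
  R := ρ.rhs.enc
  L' := ctxCC ρ.lhs.enc ρ.lhs.encRoot ρ.lhs.varHeads
  K' := ctxCC (interfaceG ρ.rhs) (Sum.inr ()) (interfaceVars ρ.rhs)
  l := encKtoL ρ
  r := encKtoR ρ
  l' := encl' ρ
  tL := tCC ρ.lhs.enc ρ.lhs.encRoot ρ.lhs.varHeads
  tK := tCC (interfaceG ρ.rhs) (Sum.inr ()) (interfaceVars ρ.rhs)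

/-- The rewrite relation of an encoded term rewriting system `R°`. -/
def SysStep (Rs : Set (TRSRule S ar X)) (G H : LGraph (FlatL S)) : Prop :=
  ∃ ρ ∈ Rs, PBPOStep (ruleEnc ρ) G H

end RuleEnc
section Cycles

variable {W : Type}

/-- `IsUPath G u es v`: `es` is an undirected path from `u` to `v` in `G`. -/
def IsUPath (G : LGraph W) : G.V → List G.E → G.V → Prop
  | u, [], v => u = v
  | u, e :: es, v =>
      (G.src e = u ∧ IsUPath G (G.tgt e) es v) ∨ (G.tgt e = u ∧ IsUPath G (G.src e) es v)

/-- An undirected cycle at `v`: a nonempty undirected path from `v` to `v`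
with pairwise distinct edges. -/
def IsUCycle (G : LGraph W) (v : G.V) (es : List G.E) : Prop :=
  es ≠ [] ∧ es.Nodup ∧ IsUPath G v es v

/-- A cycle edge is an edge lying on some undirected cycle. -/
def CycleEdge (G : LGraph W) (e : G.E) : Prop :=
  ∃ v es, IsUCycle G v es ∧ e ∈ es

/-- A graph is cycle-free if it contains no undirected cycle. -/
def CycleFree (G : LGraph W) : Prop := ¬ ∃ v es, IsUCycle G v es

/-- `[G]`: the graph obtained from `G` by deleting all cycle edges. -/
def dropCycles (G : LGraph W) : LGraph W where
  V := G.V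
  E := {e : G.E // ¬ CycleEdge G e}
  src e := G.src e.1
  tgt e := G.tgt e.1
  lV := G.lV
  lE e := G.lE e.1

end Cycles

section Zones

variable {S : Type}

/-- A vertex is in-well-formed if it has at most one incoming edge. -/
def InWF (G : LGraph (FlatL S)) (v : G.V) : Prop :=
  ∀ e e' : G.E, G.tgt e = v → G.tgt e' = v → e = e'

/-- A vertex is out-well-formed if its label is a function symbol `f` and it
has exactly `ar f` outgoing edges, labeled `1, …, ar f`. -/
def OutWF (G : LGraph (FlatL S)) (ar : S → ℕ) (v : G.V) : Prop :=
  ∃ f : S, G.lV v = Flat.el (Sum.inl f) ∧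
    ∃ φ : Fin (ar f) ≃ {e : G.E // G.src e = v},
      ∀ i, G.lE (φ i).1 = Flat.el (Sum.inr ⟨(i : ℕ) + 1, Nat.succ_pos _⟩)

/-- A vertex is good if it is out-well-formed and all its children are
in-well-formed; otherwise it is bad. -/
def Good (G : LGraph (FlatL S)) (ar : S → ℕ) (v : G.V) : Prop :=
  OutWF G ar v ∧ ∀ e : G.E, G.src e = v → InWF G (G.tgt e)

/-- The edges included in a zone by the zoning algorithm are exactly the edges
with a good source. -/
def ZoneEdge (G : LGraph (FlatL S)) (ar : S → ℕ) (e : G.E) : Prop :=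
  Good G ar (G.src e)

/-- One directed step along an edge included in a zone. -/
def ZStep (G : LGraph (FlatL S)) (ar : S → ℕ) (u v : G.V) : Prop :=
  ∃ e, ZoneEdge G ar e ∧ G.src e = u ∧ G.tgt e = v

/-- Two vertices lie in the same zone iff they are connected by edges included
in zones (equivalence closure of `ZStep`). -/
def SameZone (G : LGraph (FlatL S)) (ar : S → ℕ) : G.V → G.V → Prop :=
  Relation.EqvGen (ZStep G ar)

/-- A root of a zone: a vertex with no parent inside its zone. -/
def IsZoneRoot (G : LGraph (FlatL S)) (ar : S → ℕ) (r : G.V) : Prop :=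
  ¬ ∃ e, ZoneEdge G ar e ∧ G.tgt e = r

/-- A directed path along zone edges. -/
def IsZPath (G : LGraph (FlatL S)) (ar : S → ℕ) : G.V → List G.E → G.V → Prop
  | u, [], v => u = v
  | u, e :: es, v => ZoneEdge G ar e ∧ G.src e = u ∧ IsZPath G ar (G.tgt e) es v

/-- The zone of `v₀`, as a subgraph of `G`, with every bad vertex relabeled
with `⊥`. -/
noncomputable def zoneTermGraph (G : LGraph (FlatL S)) (ar : S → ℕ) (v₀ : G.V) :
    LGraph (FlatL S) where
  V := {u : G.V // SameZone G ar u v₀}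
  E := {e : G.E // ZoneEdge G ar e ∧ SameZone G ar (G.src e) v₀}
  src e := ⟨G.src e.1, e.2.2⟩
  tgt e := ⟨G.tgt e.1,
    Relation.EqvGen.trans _ _ _
      (Relation.EqvGen.symm _ _ (Relation.EqvGen.rel _ _ ⟨e.1, e.2.1, rfl, rfl⟩)) e.2.2⟩
  lV u := if Good G ar u.1 then G.lV u.1 else Flat.bot
  lE e := G.lE e.1

end Zones

section Relabel

variable {W : Type}

/-- `G` with the label of vertex `v` changed to `l`. -/
noncomputable def relabelV (G : LGraph W) (v : G.V) (l : W) : LGraph W :=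
  { G with lV := Function.update G.lV v l }

/-- `G` with the label of every vertex in `s` changed to `l`. -/
noncomputable def relabelSet (G : LGraph W) (s : Set G.V) (l : W) : LGraph W :=
  { G with lV := fun u => if u ∈ s then l else G.lV u }

end Relabel

/-! ### Auxiliary lemmas -/

section AuxFlat

variable {A : Type}

theorem Flat.le_def' {a b : Flat A} : (a ≤ b) = Flat.le a b := rfl

theorem Flat.antisymm' {a b : Flat A} (h1 : a ≤ b) (h2 : b ≤ a) : a = b := by
  cases a <;> cases b <;> simp_all [Flat.le_def', Flat.le]

theorem Flat.eq_bot_of_le_bot {a : Flat A} (h : a ≤ Flat.bot) : a = Flat.bot := by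
  cases a <;> simp_all [Flat.le_def', Flat.le]

theorem Flat.el_ne_top {a : A} : (Flat.el a : Flat A) ≠ Flat.top := by simp

theorem Flat.eq_el_of_el_le_of_le_el {a b : A} {x : Flat A}
    (h1 : Flat.el a ≤ x) (h2 : x ≤ Flat.el b) : x = Flat.el a := by
  cases x <;> simp_all [Flat.le_def', Flat.le]

/-- Supremum of a set in the flat lattice. -/
noncomputable def supFlat (s : Set (Flat A)) : Flat A :=
  if Flat.top ∈ s ∨ ∃ a b, Flat.el a ∈ s ∧ Flat.el b ∈ s ∧ a ≠ b then Flat.top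
  else if h : ∃ a, Flat.el a ∈ s then Flat.el h.choose else Flat.bot

theorem le_supFlat {s : Set (Flat A)} {x : Flat A} (hx : x ∈ s) : x ≤ supFlat s := by
  unfold supFlat
  split
  · exact Flat.le_top _
  · rename_i hcond
    cases x with
    | bot => split <;> exact Flat.bot_le _
    | top => exact absurd (Or.inl hx) hcond
    | el a =>
      have hex : ∃ a, (Flat.el a : Flat A) ∈ s := ⟨a, hx⟩
      rw [dif_pos hex]
      have : a = hex.choose := by
        by_contra hne
        exact hcond (Or.inr ⟨a, hex.choose, hx, hex.choose_spec, hne⟩)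
      rw [this]

theorem supFlat_le {s : Set (Flat A)} {c : Flat A} (h : ∀ x ∈ s, x ≤ c) :
    supFlat s ≤ c := by
  unfold supFlat
  split
  · rename_i hcond
    rcases hcond with htop | ⟨a, b, ha, hb, hab⟩
    · exact h _ htop
    · have h1 := h _ ha
      have h2 := h _ hb
      cases c <;> simp_all [Flat.le_def', Flat.le]
  · split
    · rename_i hex
      exact h _ hex.choose_spec
    · exact Flat.bot_le _

end AuxFlat

section AuxCat

variable {A : Type}

theorem comp_onV {G H K : LGraph (Flat A)} (f : G ⟶ H) (g : H ⟶ K) :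
    (f ≫ g).onV = g.onV ∘ f.onV := rfl

theorem comp_onE {G H K : LGraph (Flat A)} (f : G ⟶ H) (g : H ⟶ K) :
    (f ≫ g).onE = g.onE ∘ f.onE := rfl

theorem hom_congr_onV {G H : LGraph (Flat A)} {f g : G ⟶ H} (h : f = g) (x : G.V) :
    GLHom.onV f x = GLHom.onV g x := by rw [h]

theorem hom_congr_onE {G H : LGraph (Flat A)} {f g : G ⟶ H} (h : f = g) (x : G.E) :
    GLHom.onE f x = GLHom.onE g x := by rw [h]

/-- The one-point graph. -/
def ptG (A : Type) : LGraph (Flat A) :=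
  ⟨PUnit, Empty, fun e => e.elim, fun e => e.elim, fun _ => Flat.bot, fun e => e.elim⟩

/-- The morphism from the point graph picking a vertex. -/
def ptHom {A : Type} (Q : LGraph (Flat A)) (z : Q.V) : ptG A ⟶ Q :=
  ⟨fun _ => z, fun e => e.elim, fun e => e.elim, fun e => e.elim,
   fun _ => Flat.bot_le _, fun e => e.elim⟩

/-- The single-edge graph. -/
def edgeG (A : Type) : LGraph (Flat A) :=
  ⟨Bool, PUnit, fun _ => false, fun _ => true, fun _ => Flat.bot, fun _ => Flat.bot⟩

/-- The morphism from the single-edge graph picking an edge. -/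
def edgeHom {A : Type} (Q : LGraph (Flat A)) (e : Q.E) : edgeG A ⟶ Q :=
  ⟨fun b => cond b (Q.tgt e) (Q.src e), fun _ => e, fun _ => rfl, fun _ => rfl,
   fun _ => Flat.bot_le _, fun _ => Flat.bot_le _⟩

theorem injV_of_mono {G H : LGraph (Flat A)} (f : G ⟶ H) (hf : Mono f) :
    Function.Injective (GLHom.onV f) := by
  intro a b hab
  have hcomp : ptHom G a ≫ f = ptHom G b ≫ f :=
    GLHom.ext' (funext fun _ => hab) (funext fun e => e.elim)
  have := hf.right_cancellation _ _ hcomp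
  exact congrFun (congrArg GLHom.onV this) PUnit.unit

theorem injE_of_mono {G H : LGraph (Flat A)} (f : G ⟶ H) (hf : Mono f) :
    Function.Injective (GLHom.onE f) := by
  intro a b hab
  have hV : ∀ c : Bool, GLHom.onV f (cond c (G.tgt a) (G.src a)) =
      GLHom.onV f (cond c (G.tgt b) (G.src b)) := by
    intro c
    cases c
    · show GLHom.onV f (G.src a) = GLHom.onV f (G.src b)
      rw [← f.src_comm, ← f.src_comm, hab]
    · show GLHom.onV f (G.tgt a) = GLHom.onV f (G.tgt b)
      rw [← f.tgt_comm, ← f.tgt_comm, hab]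
  have hcomp : edgeHom G a ≫ f = edgeHom G b ≫ f :=
    GLHom.ext' (funext hV) (funext fun _ => hab)
  have := hf.right_cancellation _ _ hcomp
  exact congrFun (congrArg GLHom.onE this) PUnit.unit

theorem mono_of_inj {G H : LGraph (Flat A)} (f : G ⟶ H)
    (hV : Function.Injective (GLHom.onV f)) (hE : Function.Injective (GLHom.onE f)) :
    Mono f := by
  constructor
  intro Z g₁ g₂ h
  refine GLHom.ext' (funext fun x => hV ?_) (funext fun e => hE ?_)
  · exact congrFun (congrArg GLHom.onV h) x
  · exact congrFun (congrArg GLHom.onE h) e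

end AuxCat

section AuxEnc

variable {S : Type} {ar : S → ℕ} {X : Type}

theorem lhs_root_isSome (ρ : TRSRule S ar X) : (ρ.lhs.symAt []).isSome := by
  cases h : ρ.lhs with
  | var x => exact absurd h (ρ.lhs_not_var x)
  | app f ts => simp [Term.symAt, Term.sub?, Term.head?]

theorem encRoot_lhs (ρ : TRSRule S ar X) :
    ρ.lhs.encRoot = Sum.inl ⟨[], lhs_root_isSome ρ⟩ := by
  unfold Term.encRoot
  erw [dif_pos (lhs_root_isSome ρ)]

theorem inl_not_varHead {t : Term S ar X} (q : {p : List ℕ // (t.symAt p).isSome}) :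
    (Sum.inl q : t.encV) ∉ t.varHeads := by
  rintro ⟨x, hx⟩
  cases hx

theorem L'_lV_sym (ρ : TRSRule S ar X) (q : {p : List ℕ // (ρ.lhs.symAt p).isSome}) :
    (ruleEnc ρ).L'.lV (Sum.inl (Sum.inl (Sum.inl q))) =
      (ρ.lhs.symAt q.1).elim Flat.bot (fun f => Flat.el (Sum.inl f)) := by
  show (ctxCC ρ.lhs.enc ρ.lhs.encRoot ρ.lhs.varHeads).lV _ = _
  refine (ctxCC_lV_inl _ _ _ _).trans ?_
  erw [if_neg (inl_not_varHead q)]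
  rfl

theorem L'_lV_ne_top_cases (ρ : TRSRule S ar X) (z : (ruleEnc ρ).L'.V)
    (h : (ruleEnc ρ).L'.lV z ≠ Flat.top) :
    ∃ q, z = Sum.inl (Sum.inl (Sum.inl q)) := by
  rcases z with ((w | x') | u)
  · rcases w with q | x
    · exact ⟨q, rfl⟩
    · refine absurd ?_ h
      show (ctxCC ρ.lhs.enc ρ.lhs.encRoot ρ.lhs.varHeads).lV _ = _
      refine (ctxCC_lV_inl _ _ _ _).trans ?_
      rw [if_pos ⟨x, rfl⟩]
  · exact absurd rfl h
  · exact absurd rfl h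

theorem L'_lV_encRoot_ne_top (ρ : TRSRule S ar X) :
    (ruleEnc ρ).L'.lV (Sum.inl (Sum.inl ρ.lhs.encRoot)) ≠ Flat.top := by
  rw [encRoot_lhs]
  rw [L'_lV_sym]
  obtain ⟨f, hf⟩ := Option.isSome_iff_exists.mp (lhs_root_isSome ρ)
  rw [hf]
  simp

theorem K'_lV_eq_top (ρ : TRSRule S ar X) (z : (ruleEnc ρ).K'.V)
    (h : z ≠ Sum.inl (Sum.inl (Sum.inr ()))) : (ruleEnc ρ).K'.lV z = Flat.top := by
  rcases z with ((w | x') | u)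
  · rcases w with x | u
    · show (ctxCC (interfaceG ρ.rhs) (Sum.inr ()) (interfaceVars ρ.rhs)).lV _ = _
      refine (ctxCC_lV_inl _ _ _ _).trans ?_
      rw [if_pos ⟨x, rfl⟩]
    · exact absurd rfl h
  · rfl
  · rfl

theorem L'_src_inl (ρ : TRSRule S ar X) {eL' : (ruleEnc ρ).L'.E}
    {q : {p : List ℕ // (ρ.lhs.symAt p).isSome}}
    (h : (ruleEnc ρ).L'.src eL' = Sum.inl (Sum.inl (Sum.inl q))) :
    ∃ e₂ : ρ.lhs.encE, eL' = Sum.inl (Sum.inl e₂) ∧ ρ.lhs.enc.src e₂ = Sum.inl q := by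
  rcases eL' with ((e₂ | (x' | x')) | b)
  · refine ⟨e₂, rfl, ?_⟩
    have : (Sum.inl (Sum.inl (ρ.lhs.enc.src e₂)) :
        (ruleEnc ρ).L'.V) = Sum.inl (Sum.inl (Sum.inl q)) := h
    exact Sum.inl_injective (Sum.inl_injective this)
  · obtain ⟨y, hy⟩ := x'.2
    have : (Sum.inl (Sum.inl x'.1) : (ruleEnc ρ).L'.V) = Sum.inl (Sum.inl (Sum.inl q)) := h
    injection this with h1
    injection h1 with h2
    rw [← hy] at h2
    exact absurd h2 (by simp)
  · exact absurd h (by simp [ruleEnc, ctxCC, upperCC, lowerCC]; intro h'; cases h')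
  · exact absurd h (by simp [ruleEnc, ctxCC, upperCC, lowerCC])

theorem encTgt_ne_root (ρ : TRSRule S ar X) (e₂ : ρ.lhs.encE) :
    ρ.lhs.encTgt e₂ ≠ ρ.lhs.encRoot := by
  rw [encRoot_lhs]
  unfold Term.encTgt
  split_ifs with hc
  · intro h
    erw [dif_pos hc] at h
    injection h with h1
    have h2 : e₂.1.1 ++ [e₂.1.2] = [] := congrArg Subtype.val h1
    simp at h2
  · erw [dif_neg hc]; intro h; cases h

theorem L'_tgt_inl (ρ : TRSRule S ar X) {eL' : (ruleEnc ρ).L'.E} {tv : ρ.lhs.encV}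
    (htv : tv ≠ ρ.lhs.encRoot)
    (h : (ruleEnc ρ).L'.tgt eL' = Sum.inl (Sum.inl tv)) :
    ∃ e₂ : ρ.lhs.encE, eL' = Sum.inl (Sum.inl e₂) ∧ ρ.lhs.enc.tgt e₂ = tv := by
  rcases eL' with ((e₂ | (x' | x')) | b)
  · refine ⟨e₂, rfl, ?_⟩
    have : (Sum.inl (Sum.inl (ρ.lhs.enc.tgt e₂)) :
        (ruleEnc ρ).L'.V) = Sum.inl (Sum.inl tv) := h
    exact Sum.inl_injective (Sum.inl_injective this)
  · exact absurd h (by simp [ruleEnc, ctxCC, upperCC, lowerCC]; intro h'; cases h')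
  · exact absurd h (by simp [ruleEnc, ctxCC, upperCC, lowerCC]; intro h'; cases h')
  · cases b
    · exact absurd h (by simp [ruleEnc, ctxCC, upperCC, lowerCC])
    · have : (Sum.inl (Sum.inl ρ.lhs.encRoot) : (ruleEnc ρ).L'.V) = Sum.inl (Sum.inl tv) := h
      injection this with h1
      injection h1 with h2
      exact absurd h2.symm htv

theorem encE_ext {t : Term S ar X} {e₃ e₄ : t.encE}
    (h : e₃.1.1 ++ [e₃.1.2] = e₄.1.1 ++ [e₄.1.2]) : e₃ = e₄ := by
  have hl : e₃.1.1.length = e₄.1.1.length := by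
    have := congrArg List.length h
    simpa using this
  have h1 : e₃.1.1 = e₄.1.1 := List.append_inj_left h hl
  have h2 : e₃.1.2 = e₄.1.2 := by
    have := List.append_inj_right h hl
    simpa using this
  exact Subtype.ext (Prod.ext h1 h2)

theorem encTgt_inj {t : Term S ar X} (hlin : t.Linear) {e₃ e₄ : t.encE}
    (h : t.encTgt e₃ = t.encTgt e₄) : e₃ = e₄ := by
  unfold Term.encTgt at h
  by_cases h₃ : (t.symAt (e₃.1.1 ++ [e₃.1.2])).isSome <;>
    by_cases h₄ : (t.symAt (e₄.1.1 ++ [e₄.1.2])).isSome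
  · erw [dif_pos h₃, dif_pos h₄] at h
    injection h with h1
    exact encE_ext (congrArg Subtype.val h1)
  · erw [dif_pos h₃, dif_neg h₄] at h
    exact absurd h (by simp)
  · erw [dif_neg h₃, dif_pos h₄] at h
    exact absurd h (by simp)
  · erw [dif_neg h₃, dif_neg h₄] at h
    injection h with h1
    have hval := Subtype.mk_eq_mk.mp h1
    have spec₃ := Classical.choose_spec (t.edge_tgt_var e₃.2 h₃)
    have spec₄ := Classical.choose_spec (t.edge_tgt_var e₄.2 h₄)
    rw [hval] at spec₃
    exact encE_ext (hlin _ _ _ spec₃ spec₄)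

end AuxEnc

section AuxGood

variable {S : Type} {ar : S → ℕ} {X : Type}

/-- The `i`-th outgoing edge of the symbol vertex at position `p`. -/
def eLedge (t : Term S ar X) {p : List ℕ} {f : S} (hf : t.symAt p = some f)
    (i : Fin (ar f)) : t.encE := ⟨(p, i.1), ⟨f, hf, i.2⟩⟩

theorem good_of_alpha_ne_top (ρ : TRSRule S ar X) (hρ : ρ.Linear)
    {G H : LGraph (FlatL S)} (st : RewriteStep (ruleEnc ρ) G H) (v : G.V)
    (h : (ruleEnc ρ).L'.lV (GLHom.onV st.α v) ≠ Flat.top) : Good G ar v := by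
  have injEm := injE_of_mono st.m st.mono_m
  have hmaE : ∀ x, GLHom.onE st.α (GLHom.onE st.m x) = Sum.inl (Sum.inl x) :=
    fun x => (hom_congr_onE st.matchPB.w x).symm
  have reflV : ∀ (x : (ruleEnc ρ).L.V) (vg : G.V),
      GLHom.onV st.α vg = Sum.inl (Sum.inl x) → GLHom.onV st.m x = vg := by
    intro x vg hx
    have comm : ptHom (ruleEnc ρ).L x ≫ (ruleEnc ρ).tL = ptHom G vg ≫ st.α :=
      GLHom.ext' (funext fun _ => hx.symm) (funext fun e => e.elim)
    have hfst := st.matchPB.lift_fst _ _ comm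
    rw [Category.comp_id] at hfst
    have hsnd := st.matchPB.lift_snd _ _ comm
    rw [hfst] at hsnd
    exact hom_congr_onV hsnd PUnit.unit
  have reflE : ∀ (e₀ : (ruleEnc ρ).L.E) (eg : G.E),
      GLHom.onE st.α eg = Sum.inl (Sum.inl e₀) → GLHom.onE st.m e₀ = eg := by
    intro e₀ eg hx
    have commV : ∀ b : Bool,
        GLHom.onV ((ruleEnc ρ).tL) (cond b ((ruleEnc ρ).L.tgt e₀) ((ruleEnc ρ).L.src e₀)) =
        GLHom.onV st.α (cond b (G.tgt eg) (G.src eg)) := by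
      intro b
      cases b
      · show (Sum.inl (Sum.inl ((ruleEnc ρ).L.src e₀)) : (ruleEnc ρ).L'.V) =
          GLHom.onV st.α (G.src eg)
        rw [← st.α.src_comm eg, hx]
        rfl
      · show (Sum.inl (Sum.inl ((ruleEnc ρ).L.tgt e₀)) : (ruleEnc ρ).L'.V) =
          GLHom.onV st.α (G.tgt eg)
        rw [← st.α.tgt_comm eg, hx]
        rfl
    have comm : edgeHom (ruleEnc ρ).L e₀ ≫ (ruleEnc ρ).tL = edgeHom G eg ≫ st.α :=
      GLHom.ext' (funext commV) (funext fun _ => hx.symm)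
    have hfst := st.matchPB.lift_fst _ _ comm
    rw [Category.comp_id] at hfst
    have hsnd := st.matchPB.lift_snd _ _ comm
    rw [hfst] at hsnd
    exact hom_congr_onE hsnd PUnit.unit
  obtain ⟨q, hq⟩ := L'_lV_ne_top_cases ρ _ h
  have hmv : GLHom.onV st.m (Sum.inl q) = v := reflV (Sum.inl q) v hq
  obtain ⟨f, hf⟩ := Option.isSome_iff_exists.mp q.2
  have hL : ρ.lhs.enc.lV (Sum.inl q) = Flat.el (Sum.inl f) := by
    show (ρ.lhs.symAt q.1).elim Flat.bot (fun f => Flat.el (Sum.inl f)) = _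
    rw [hf]
    simp
  have hlv : G.lV v = Flat.el (Sum.inl f) := by
    have h1 : ρ.lhs.enc.lV (Sum.inl q) ≤ G.lV v := hmv ▸ st.m.lV_le (Sum.inl q)
    rw [hL] at h1
    have h2 := st.α.lV_le v
    erw [hq, L'_lV_sym, hf] at h2
    exact Flat.eq_el_of_el_le_of_le_el h1 h2
  have hsrc_eL : ∀ i, ρ.lhs.enc.src (eLedge ρ.lhs hf i) = Sum.inl q :=
    fun i => congrArg Sum.inl (Subtype.ext rfl)
  have hψ : ∀ i, G.src (GLHom.onE st.m (eLedge ρ.lhs hf i)) = v := by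
    intro i
    erw [st.m.src_comm]
    show GLHom.onV st.m (ρ.lhs.enc.src (eLedge ρ.lhs hf i)) = v
    rw [hsrc_eL i, hmv]
  have esurj : ∀ eg : G.E, G.src eg = v →
      ∃ e₂ : ρ.lhs.encE, GLHom.onE st.α eg = Sum.inl (Sum.inl e₂) ∧
        GLHom.onE st.m e₂ = eg ∧ e₂.1.1 = q.1 := by
    intro eg hsrc
    have h1 : (ruleEnc ρ).L'.src (GLHom.onE st.α eg) = Sum.inl (Sum.inl (Sum.inl q)) := by
      rw [st.α.src_comm eg, hsrc, hq]
    obtain ⟨e₂, he₂, hsrc₂⟩ := L'_src_inl ρ h1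
    exact ⟨e₂, he₂, reflE e₂ eg he₂,
      congrArg Subtype.val (Sum.inl_injective hsrc₂)⟩
  constructor
  · -- OutWF
    refine ⟨f, hlv, ?_⟩
    have hbij : Function.Bijective (fun i => (⟨GLHom.onE st.m (eLedge ρ.lhs hf i), hψ i⟩ :
        {e : G.E // G.src e = v})) := by
      constructor
      · intro i j hij
        have h1 : GLHom.onE st.m (eLedge ρ.lhs hf i) = GLHom.onE st.m (eLedge ρ.lhs hf j) :=
          congrArg Subtype.val hij
        have h2 := injEm h1
        have h3 : i.1 = j.1 := congrArg (fun e : ρ.lhs.encE => e.1.2) h2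
        exact Fin.ext h3
      · rintro ⟨eg, hsrc⟩
        obtain ⟨e₂, he₂, hm₂, hp⟩ := esurj eg hsrc
        obtain ⟨f', hf', hlt⟩ := e₂.2
        rw [hp] at hf'
        have hff : f' = f := Option.some_injective _ (hf'.symm.trans hf)
        subst hff
        refine ⟨⟨e₂.1.2, hlt⟩, ?_⟩
        have heq : eLedge ρ.lhs hf ⟨e₂.1.2, hlt⟩ = e₂ :=
          Subtype.ext (Prod.ext hp.symm rfl)
        refine Subtype.ext ?_
        show GLHom.onE st.m (eLedge ρ.lhs hf ⟨e₂.1.2, hlt⟩) = eg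
        rw [heq]
        exact hm₂
    refine ⟨Equiv.ofBijective _ hbij, ?_⟩
    intro i
    show G.lE (GLHom.onE st.m (eLedge ρ.lhs hf i)) = _
    have h1 : ρ.lhs.enc.lE (eLedge ρ.lhs hf i) ≤ G.lE (GLHom.onE st.m (eLedge ρ.lhs hf i)) :=
      st.m.lE_le (eLedge ρ.lhs hf i)
    have h2 := st.α.lE_le (GLHom.onE st.m (eLedge ρ.lhs hf i))
    rw [hmaE (eLedge ρ.lhs hf i)] at h2
    have h2' : G.lE (GLHom.onE st.m (eLedge ρ.lhs hf i)) ≤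
        Flat.el (Sum.inr ⟨(i : ℕ) + 1, Nat.succ_pos _⟩) := h2
    have h1' : Flat.el (Sum.inr ⟨(i : ℕ) + 1, Nat.succ_pos _⟩) ≤
        G.lE (GLHom.onE st.m (eLedge ρ.lhs hf i)) := h1
    exact Flat.eq_el_of_el_le_of_le_el h1' h2'
  · -- children are in-well-formed
    intro e hsrce
    obtain ⟨e₂, he₂, hm₂, hp₂⟩ := esurj e hsrce
    have htv : GLHom.onV st.α (G.tgt e) = Sum.inl (Sum.inl (ρ.lhs.enc.tgt e₂)) := by
      rw [← st.α.tgt_comm e, he₂]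
      rfl
    have htv_ne : ρ.lhs.enc.tgt e₂ ≠ ρ.lhs.encRoot := encTgt_ne_root ρ e₂
    intro e' e'' ht' ht''
    have h1' : (ruleEnc ρ).L'.tgt (GLHom.onE st.α e') =
        Sum.inl (Sum.inl (ρ.lhs.enc.tgt e₂)) := by
      rw [st.α.tgt_comm e', ht']
      exact htv
    have h1'' : (ruleEnc ρ).L'.tgt (GLHom.onE st.α e'') =
        Sum.inl (Sum.inl (ρ.lhs.enc.tgt e₂)) := by
      rw [st.α.tgt_comm e'', ht'']
      exact htv
    obtain ⟨e₃, he₃, htgt₃⟩ := L'_tgt_inl ρ htv_ne h1'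
    obtain ⟨e₄, he₄, htgt₄⟩ := L'_tgt_inl ρ htv_ne h1''
    have he34 : e₃ = e₄ := encTgt_inj hρ.1 (htgt₃.trans htgt₄.symm)
    have hr₃ := reflE e₃ e' he₃
    have hr₄ := reflE e₄ e'' he₄
    rw [← hr₃, ← hr₄, he34]

end AuxGood

section AuxSep

variable {A : Type}

/-- Two-point indicator target graph. -/
def TBool (A : Type) : LGraph (Flat A) :=
  ⟨Bool, Bool × Bool, Prod.fst, Prod.snd, fun _ => Flat.top, fun _ => Flat.top⟩

/-- Vertex indicator morphism. -/
def indV (Q : LGraph (Flat A)) (P : Q.V → Bool) : Q ⟶ TBool A :=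
  ⟨P, fun e => (P (Q.src e), P (Q.tgt e)), fun _ => rfl, fun _ => rfl,
   fun _ => Flat.le_top _, fun _ => Flat.le_top _⟩

/-- Single-vertex loop-edge target graph. -/
def TEdge (A : Type) : LGraph (Flat A) :=
  ⟨Unit, Bool, fun _ => (), fun _ => (), fun _ => Flat.top, fun _ => Flat.top⟩

/-- Edge indicator morphism. -/
def indE (Q : LGraph (Flat A)) (P : Q.E → Bool) : Q ⟶ TEdge A :=
  ⟨fun _ => (), P, fun _ => rfl, fun _ => rfl,
   fun _ => Flat.le_top _, fun _ => Flat.le_top _⟩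

end AuxSep

section AuxBot

variable {S : Type} {ar : S → ℕ} {X : Type}

theorem enc_lV_bot_of_top (ρ : TRSRule S ar X) {x : ρ.lhs.encV}
    (h : (ruleEnc ρ).L'.lV (Sum.inl (Sum.inl x)) = Flat.top) :
    ρ.lhs.enc.lV x = Flat.bot := by
  rcases x with q | xx
  · exfalso
    rw [L'_lV_sym] at h
    obtain ⟨f, hf⟩ := Option.isSome_iff_exists.mp q.2
    rw [hf] at h
    have e1 : ((some f).elim Flat.bot fun g => (Flat.el (Sum.inl g) : FlatL S)) =
        Flat.el (Sum.inl f) := by simp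
    rw [e1] at h
    exact Flat.el_ne_top h
  · rfl

theorem K'_lV_root (ρ : TRSRule S ar X) :
    (ruleEnc ρ).K'.lV (Sum.inl (Sum.inl (Sum.inr ()))) = Flat.bot := by
  show (ctxCC (interfaceG ρ.rhs) (Sum.inr ()) (interfaceVars ρ.rhs)).lV _ = _
  refine (ctxCC_lV_inl _ _ _ _).trans ?_
  rw [if_neg]
  · rfl
  · rintro ⟨y, hy⟩
    cases hy

end AuxBot

/-- Bad node labels are irrelevant. For every bad vertex `v` of a
finite `Σ°`-labeled graph `G` and every label `l ∈ Σ°`: if `G ⇒ H` is a PBPO⁺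
rewrite step via the rule encoding `ρ°` of a linear term rewrite rule `ρ` with
adherence morphism `α`, then `G^[ℓ(v):=l] ⇒ H^[ℓ(v):=l]` is a PBPO⁺ rewrite
step via `ρ°` with the same adherence morphism (`H`'s copy of `v`, if any, is
the `g_R`-image of the `g_L`-preimage of `v`). -/
theorem statement_18 {S : Type} {ar : S → ℕ} {X : Type}
    (ρ : TRSRule S ar X) (hρ : ρ.Linear) (G H : LGraph (FlatL S))
    (hfin : FiniteG G) (st : RewriteStep (ruleEnc ρ) G H)
    (v : G.V) (hbad : ¬ Good G ar v) (l : FlatL S) :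
    ∃ st' : RewriteStep (ruleEnc ρ) (relabelV G v l)
        (relabelSet H {u : H.V | ∃ y : st.GK.V, homV st.gL y = v ∧ homV st.gR y = u} l),
      homV st'.α = homV st.α ∧ homE st'.α = homE st.α := by
  classical
  -- Claim 1 : the α-image of the bad vertex v is labeled ⊤
  have hvtop : (ruleEnc ρ).L'.lV (GLHom.onV st.α v) = Flat.top := by
    by_contra hne
    exact hbad (good_of_alpha_ne_top ρ hρ st v hne)
  have hαpb : ∀ y : st.GK.V, GLHom.onV st.α (GLHom.onV st.gL y)
      = GLHom.onV (ruleEnc ρ).l' (GLHom.onV st.u' y) :=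
    fun y => hom_congr_onV st.pbK.w y
  have hK'top : ∀ y : st.GK.V, GLHom.onV st.gL y = v →
      (ruleEnc ρ).K'.lV (GLHom.onV st.u' y) = Flat.top := by
    intro y hy
    apply K'_lV_eq_top
    intro hroot
    apply L'_lV_encRoot_ne_top ρ
    have h1 := hαpb y
    rw [hy, hroot] at h1
    have h2 : GLHom.onV st.α v = Sum.inl (Sum.inl ρ.lhs.encRoot) := h1
    erw [← h2]
    exact hvtop
  -- injectivity of u on vertices
  have hu_injV : Function.Injective (GLHom.onV st.u) := by
    intro a b hab
    have h1 : GLHom.onV st.u' (GLHom.onV st.u a) =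
        Sum.inl (Sum.inl a) := hom_congr_onV st.u_u' a
    have h2 : GLHom.onV st.u' (GLHom.onV st.u b) =
        Sum.inl (Sum.inl b) := hom_congr_onV st.u_u' b
    have h3 : (Sum.inl (Sum.inl a) : (ruleEnc ρ).K'.V) = Sum.inl (Sum.inl b) := by
      erw [← h1, ← h2, hab]
    exact Sum.inl_injective (Sum.inl_injective h3)
  have hugL : ∀ k, GLHom.onV st.gL (GLHom.onV st.u k) =
      GLHom.onV st.m (GLHom.onV (ruleEnc ρ).l k) :=
    fun k => hom_congr_onV st.u_gL k
  -- interface vertices mapping onto v are variable vertices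
  have hkv : ∀ k : (ruleEnc ρ).K.V, GLHom.onV st.m (GLHom.onV (ruleEnc ρ).l k) = v →
      ∃ x : {x : X // x ∈ ρ.rhs.vars}, k = Sum.inl x := by
    intro k hk
    rcases k with x | uu
    · exact ⟨x, rfl⟩
    · exfalso
      have hroot : GLHom.onV (ruleEnc ρ).l (Sum.inr uu) = ρ.lhs.encRoot := rfl
      rw [hroot] at hk
      have h0 : (Sum.inl (Sum.inl ρ.lhs.encRoot) : (ruleEnc ρ).L'.V) =
          GLHom.onV st.α (GLHom.onV st.m ρ.lhs.encRoot) :=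
        hom_congr_onV st.matchPB.w ρ.lhs.encRoot
      apply L'_lV_encRoot_ne_top ρ
      rw [h0, hk]
      exact hvtop
  have hGKroot : ∀ uu : Unit, st.GK.lV (GLHom.onV st.u (Sum.inr uu)) = Flat.bot := by
    intro uu
    apply Flat.eq_bot_of_le_bot
    have h1 := st.u'.lV_le (GLHom.onV st.u (Sum.inr uu))
    have h2 : GLHom.onV st.u' (GLHom.onV st.u (Sum.inr uu)) =
        Sum.inl (Sum.inl (Sum.inr ())) := hom_congr_onV st.u_u' (Sum.inr uu)
    erw [h2, K'_lV_root] at h1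
    exact h1
  -- the new graphs
  set Y : Set st.GK.V := {y | GLHom.onV st.gL y = v} with hY
  set Uset : Set H.V :=
    {u : H.V | ∃ y : st.GK.V, homV st.gL y = v ∧ homV st.gR y = u} with hU
  -- the new morphisms
  let m' : (ruleEnc ρ).L ⟶ relabelV G v l :=
    { onV := st.m.onV, onE := st.m.onE, src_comm := st.m.src_comm,
      tgt_comm := st.m.tgt_comm, lE_le := st.m.lE_le,
      lV_le := by
        intro x
        show (ruleEnc ρ).L.lV x ≤ Function.update G.lV v l (GLHom.onV st.m x)
        by_cases hx : GLHom.onV st.m x = v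
        · rw [hx, Function.update_self]
          have h0 : (Sum.inl (Sum.inl x) : (ruleEnc ρ).L'.V) =
              GLHom.onV st.α (GLHom.onV st.m x) := hom_congr_onV st.matchPB.w x
          have htop : (ruleEnc ρ).L'.lV (Sum.inl (Sum.inl x)) = Flat.top := by
            rw [h0, hx]; exact hvtop
          have hb : ρ.lhs.enc.lV x = Flat.bot := enc_lV_bot_of_top ρ htop
          show ρ.lhs.enc.lV x ≤ l
          rw [hb]
          exact Flat.bot_le l
        · rw [Function.update_of_ne hx]
          exact st.m.lV_le x }
  let α' : relabelV G v l ⟶ (ruleEnc ρ).L' :=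
    { onV := st.α.onV, onE := st.α.onE, src_comm := st.α.src_comm,
      tgt_comm := st.α.tgt_comm, lE_le := st.α.lE_le,
      lV_le := by
        intro x
        show Function.update G.lV v l x ≤ _
        by_cases hx : x = v
        · rw [hx, Function.update_self, hvtop]
          exact Flat.le_top l
        · erw [Function.update_of_ne hx]
          exact st.α.lV_le x }
  let GK' := relabelSet st.GK Y l
  let gL' : GK' ⟶ relabelV G v l :=
    { onV := st.gL.onV, onE := st.gL.onE, src_comm := st.gL.src_comm,
      tgt_comm := st.gL.tgt_comm, lE_le := st.gL.lE_le,
      lV_le := by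
        intro y
        show (if y ∈ Y then l else st.GK.lV y) ≤
          Function.update G.lV v l (GLHom.onV st.gL y)
        by_cases hy : y ∈ Y
        · rw [if_pos hy]
          have hyv : GLHom.onV st.gL y = v := hy
          rw [hyv, Function.update_self]
        · rw [if_neg hy, Function.update_of_ne hy]
          exact st.gL.lV_le y }
  let u'' : GK' ⟶ (ruleEnc ρ).K' :=
    { onV := st.u'.onV, onE := st.u'.onE, src_comm := st.u'.src_comm,
      tgt_comm := st.u'.tgt_comm, lE_le := st.u'.lE_le,
      lV_le := by
        intro y
        show (if y ∈ Y then l else st.GK.lV y) ≤ _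
        by_cases hy : y ∈ Y
        · rw [if_pos hy, hK'top y hy]
          exact Flat.le_top l
        · rw [if_neg hy]
          exact st.u'.lV_le y }
  let u₂ : (ruleEnc ρ).K ⟶ GK' :=
    { onV := st.u.onV, onE := st.u.onE, src_comm := st.u.src_comm,
      tgt_comm := st.u.tgt_comm,
      lV_le := fun k => Flat.bot_le _,
      lE_le := fun e => Empty.elim e }
  -- the match square is a pullback
  have matchPB' : IsPullback (𝟙 (ruleEnc ρ).L) m' (ruleEnc ρ).tL α' := by
    have eqc : 𝟙 (ruleEnc ρ).L ≫ (ruleEnc ρ).tL = m' ≫ α' :=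
      GLHom.ext' (congrArg GLHom.onV st.matchPB.w) (congrArg GLHom.onE st.matchPB.w)
    have hliftm : ∀ s : Limits.PullbackCone (ruleEnc ρ).tL α',
        ∃ h0 : s.pt ⟶ (ruleEnc ρ).L, h0 = s.fst ∧
          (GLHom.onV (h0 ≫ m') = GLHom.onV s.snd ∧
           GLHom.onE (h0 ≫ m') = GLHom.onE s.snd) := by
      intro s
      let snd' : GLHom s.pt (relabelV G v l) := s.snd
      let ghat : s.pt ⟶ G :=
        { onV := snd'.onV, onE := snd'.onE,
          src_comm := snd'.src_comm,
          tgt_comm := snd'.tgt_comm, lE_le := snd'.lE_le,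
          lV_le := by
            intro x
            by_cases hx : snd'.onV x = v
            · have hc : GLHom.onV (ruleEnc ρ).tL (GLHom.onV s.fst x) =
                  GLHom.onV st.α (snd'.onV x) := hom_congr_onV s.condition x
              rw [hx] at hc
              have hc' : (Sum.inl (Sum.inl (GLHom.onV s.fst x)) : (ruleEnc ρ).L'.V) =
                  GLHom.onV st.α v := hc
              have htop : (ruleEnc ρ).L'.lV
                  (Sum.inl (Sum.inl (GLHom.onV s.fst x))) = Flat.top := by
                rw [hc']; exact hvtop
              have hb := enc_lV_bot_of_top ρ htop
              have h1 : s.pt.lV x ≤ ρ.lhs.enc.lV (GLHom.onV s.fst x) := s.fst.lV_le x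
              rw [hb] at h1
              rw [Flat.eq_bot_of_le_bot h1, hx]
              exact Flat.bot_le _
            · have h1 := snd'.lV_le x
              have h2 : (relabelV G v l).lV (snd'.onV x) =
                  G.lV (snd'.onV x) := by
                show Function.update G.lV v l _ = _
                erw [Function.update_of_ne hx]
              rw [h2] at h1
              exact h1 }
      have comm : s.fst ≫ (ruleEnc ρ).tL = ghat ≫ st.α :=
        GLHom.ext' (congrArg GLHom.onV s.condition) (congrArg GLHom.onE s.condition)
      have hfst := st.matchPB.lift_fst s.fst ghat comm
      have hsnd := st.matchPB.lift_snd s.fst ghat comm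
      rw [Category.comp_id] at hfst
      have e2V := congrArg GLHom.onV hsnd
      have e2E := congrArg GLHom.onE hsnd
      exact ⟨st.matchPB.lift s.fst ghat comm, hfst, e2V, e2E⟩
    refine IsPullback.of_isLimit (Limits.PullbackCone.IsLimit.mk eqc
      (fun s => (hliftm s).choose)
      (fun s => (Category.comp_id ((hliftm s).choose)).trans (hliftm s).choose_spec.1)
      (fun s => GLHom.ext' (hliftm s).choose_spec.2.1 (hliftm s).choose_spec.2.2)
      (fun s mm h1 _ =>
        ((Category.comp_id mm).symm.trans h1).trans (hliftm s).choose_spec.1.symm))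
  -- the pullback of α' and l'
  have pbK' : IsPullback gL' u'' α' (ruleEnc ρ).l' := by
    have ewV := congrArg GLHom.onV st.pbK.w
    have ewE := congrArg GLHom.onE st.pbK.w
    have eqc : gL' ≫ α' = u'' ≫ (ruleEnc ρ).l' := GLHom.ext' ewV ewE
    have hlift : ∀ s : Limits.PullbackCone α' (ruleEnc ρ).l',
        ∃ h0 : s.pt ⟶ GK', (GLHom.onV (h0 ≫ gL') = GLHom.onV s.fst ∧
          GLHom.onE (h0 ≫ gL') = GLHom.onE s.fst) ∧
          (GLHom.onV (h0 ≫ u'') = GLHom.onV s.snd ∧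
          GLHom.onE (h0 ≫ u'') = GLHom.onE s.snd) := by
      intro s
      let fst' : GLHom s.pt (relabelV G v l) := s.fst
      let snd2 : GLHom s.pt (ruleEnc ρ).K' := s.snd
      let Tlow : LGraph (FlatL S) :=
        { s.pt with lV := fun x => if fst'.onV x = v then Flat.bot else s.pt.lV x }
      let fhat : Tlow ⟶ G :=
        { onV := fst'.onV, onE := fst'.onE,
          src_comm := fst'.src_comm,
          tgt_comm := fst'.tgt_comm, lE_le := fst'.lE_le,
          lV_le := by
            intro x
            show (if fst'.onV x = v then Flat.bot else s.pt.lV x) ≤ _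
            by_cases hx : fst'.onV x = v
            · rw [if_pos hx]
              exact Flat.bot_le _
            · rw [if_neg hx]
              have h1 := fst'.lV_le x
              have h2 : (relabelV G v l).lV (fst'.onV x) =
                  G.lV (fst'.onV x) := by
                show Function.update G.lV v l _ = _
                erw [Function.update_of_ne hx]
              rw [h2] at h1
              exact h1 }
      let ghat : Tlow ⟶ (ruleEnc ρ).K' :=
        { onV := snd2.onV, onE := snd2.onE,
          src_comm := snd2.src_comm,
          tgt_comm := snd2.tgt_comm, lE_le := snd2.lE_le,
          lV_le := by
            intro x
            show (if fst'.onV x = v then Flat.bot else s.pt.lV x) ≤ _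
            by_cases hx : fst'.onV x = v
            · rw [if_pos hx]
              exact Flat.bot_le _
            · rw [if_neg hx]
              exact snd2.lV_le x }
      have esV := congrArg GLHom.onV s.condition
      have esE := congrArg GLHom.onE s.condition
      have comm : fhat ≫ st.α = ghat ≫ (ruleEnc ρ).l' := GLHom.ext' esV esE
      have hfst := st.pbK.lift_fst fhat ghat comm
      have hsnd := st.pbK.lift_snd fhat ghat comm
      set lf := st.pbK.lift fhat ghat comm with hlfdef
      have efV := congrArg GLHom.onV hfst
      have efE := congrArg GLHom.onE hfst
      have egV := congrArg GLHom.onV hsnd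
      have egE := congrArg GLHom.onE hsnd
      refine ⟨⟨lf.onV, lf.onE, lf.src_comm, lf.tgt_comm, ?_, lf.lE_le⟩,
        ⟨efV, efE⟩, ⟨egV, egE⟩⟩
      intro x
      have hfx : GLHom.onV st.gL (GLHom.onV lf x) =
          fst'.onV x := hom_congr_onV hfst x
      show s.pt.lV x ≤ (if GLHom.onV lf x ∈ Y then l
        else st.GK.lV (GLHom.onV lf x))
      by_cases hx : fst'.onV x = v
      · have hmem : GLHom.onV lf x ∈ Y := by
          show GLHom.onV st.gL _ = v
          rw [hfx, hx]
        rw [if_pos hmem]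
        have h1 := fst'.lV_le x
        have h2 : (relabelV G v l).lV (fst'.onV x) = l := by
          show Function.update G.lV v l _ = l
          rw [hx, Function.update_self]
        rw [h2] at h1
        exact h1
      · have hmem : GLHom.onV lf x ∉ Y := by
          show ¬ GLHom.onV st.gL _ = v
          rw [hfx]
          exact hx
        rw [if_neg hmem]
        have h1 := GLHom.lV_le lf x
        have h2 : Tlow.lV x = s.pt.lV x := if_neg hx
        rw [h2] at h1
        exact h1
    refine IsPullback.of_isLimit (Limits.PullbackCone.IsLimit.mk eqc
      (fun s => (hlift s).choose)
      (fun s => GLHom.ext' (hlift s).choose_spec.1.1 (hlift s).choose_spec.1.2)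
      (fun s => GLHom.ext' (hlift s).choose_spec.2.1 (hlift s).choose_spec.2.2)
      (fun s mm h1 h2 => ?_))
    -- uniqueness
    let fst' : GLHom s.pt (relabelV G v l) := s.fst
    let mm0 : GLHom s.pt GK' := mm
    let ml0 : GLHom s.pt GK' := (hlift s).choose
    let castV : GK'.V → st.GK.V := fun z => z
    have hmmY : ∀ x, GLHom.onV st.gL (castV (GLHom.onV mm0 x)) = fst'.onV x :=
      fun x => hom_congr_onV h1 x
    have hliftY : ∀ x, GLHom.onV st.gL (castV (GLHom.onV ml0 x)) = fst'.onV x :=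
      fun x => hom_congr_onV (GLHom.ext' (hlift s).choose_spec.1.1
        (hlift s).choose_spec.1.2 : (hlift s).choose ≫ gL' = s.fst) x
    let Tlow : LGraph (FlatL S) :=
      { s.pt with lV := fun x => if fst'.onV x = v then Flat.bot else s.pt.lV x }
    have lowbound : ∀ (φ : GLHom s.pt GK')
        (_ : ∀ x, GLHom.onV st.gL (castV (GLHom.onV φ x)) = fst'.onV x)
        (x : s.pt.V), Tlow.lV x ≤ st.GK.lV (castV (GLHom.onV φ x)) := by
      intro φ hφ x
      show (if fst'.onV x = v then Flat.bot else s.pt.lV x) ≤ _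
      by_cases hx : fst'.onV x = v
      · rw [if_pos hx]
        exact Flat.bot_le _
      · rw [if_neg hx]
        have hmem : castV (GLHom.onV φ x) ∉ Y := by
          show ¬ GLHom.onV st.gL _ = v
          rw [hφ x]
          exact hx
        have h3 := φ.lV_le x
        have h4 : GK'.lV (GLHom.onV φ x) = st.GK.lV (castV (GLHom.onV φ x)) := by
          show (if castV (GLHom.onV φ x) ∈ Y then l else _) = _
          rw [if_neg hmem]
        rw [h4] at h3
        exact h3
    let mmhat : Tlow ⟶ st.GK :=
      { onV := mm0.onV, onE := mm0.onE, src_comm := mm0.src_comm,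
        tgt_comm := mm0.tgt_comm, lE_le := mm0.lE_le,
        lV_le := lowbound mm0 hmmY }
    let mlifthat : Tlow ⟶ st.GK :=
      { onV := ml0.onV, onE := ml0.onE,
        src_comm := ml0.src_comm,
        tgt_comm := ml0.tgt_comm, lE_le := ml0.lE_le,
        lV_le := lowbound ml0 hliftY }
    have hexth : mmhat = mlifthat := by
      apply st.pbK.hom_ext
      · refine GLHom.ext' ?_ ?_
        · exact (congrArg GLHom.onV h1).trans ((hlift s).choose_spec.1.1).symm
        · exact (congrArg GLHom.onE h1).trans ((hlift s).choose_spec.1.2).symm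
      · refine GLHom.ext' ?_ ?_
        · exact (congrArg GLHom.onV h2).trans ((hlift s).choose_spec.2.1).symm
        · exact (congrArg GLHom.onE h2).trans ((hlift s).choose_spec.2.2).symm
    have exV := congrArg GLHom.onV hexth
    have exE := congrArg GLHom.onE hexth
    exact GLHom.ext' exV exE
  -- ===== pushout machinery =====
  -- vertex separation via indicator cocones
  have sepV : ∀ (PR : (ruleEnc ρ).R.V → Bool) (PG : st.GK.V → Bool),
      (∀ k : (ruleEnc ρ).K.V, PR (GLHom.onV (ruleEnc ρ).r k) = PG (GLHom.onV st.u k)) →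
      (∀ (x : (ruleEnc ρ).R.V) (y : st.GK.V),
          GLHom.onV st.w x = GLHom.onV st.gR y → PR x = PG y) ∧
      (∀ x x', GLHom.onV st.w x = GLHom.onV st.w x' → PR x = PR x') ∧
      (∀ y y', GLHom.onV st.gR y = GLHom.onV st.gR y' → PG y = PG y') := by
    intro PR PG hcomp
    have comm : (ruleEnc ρ).r ≫ indV (ruleEnc ρ).R PR = st.u ≫ indV st.GK PG := by
      refine GLHom.ext' (funext fun k => ?_) (funext fun e => ?_)
      · exact hcomp k
      · exact Empty.elim e
    have h1 := st.po.inl_desc (indV _ PR) (indV _ PG) comm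
    have h2 := st.po.inr_desc (indV _ PR) (indV _ PG) comm
    refine ⟨fun x y hxy => ?_, fun x x' hxx => ?_, fun y y' hyy => ?_⟩
    · have e1 : GLHom.onV (st.po.desc (indV _ PR) (indV _ PG) comm)
          (GLHom.onV st.w x) = PR x := hom_congr_onV h1 x
      have e2 : GLHom.onV (st.po.desc (indV _ PR) (indV _ PG) comm)
          (GLHom.onV st.gR y) = PG y := hom_congr_onV h2 y
      rw [← e1, ← e2, hxy]
    · have e1 : GLHom.onV (st.po.desc (indV _ PR) (indV _ PG) comm)
          (GLHom.onV st.w x) = PR x := hom_congr_onV h1 x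
      have e2 : GLHom.onV (st.po.desc (indV _ PR) (indV _ PG) comm)
          (GLHom.onV st.w x') = PR x' := hom_congr_onV h1 x'
      rw [← e1, ← e2, hxx]
    · have e1 : GLHom.onV (st.po.desc (indV _ PR) (indV _ PG) comm)
          (GLHom.onV st.gR y) = PG y := hom_congr_onV h2 y
      have e2 : GLHom.onV (st.po.desc (indV _ PR) (indV _ PG) comm)
          (GLHom.onV st.gR y') = PG y' := hom_congr_onV h2 y'
      rw [← e1, ← e2, hyy]
  -- edge separation (no compatibility needed: K has no edges)
  have sepE : ∀ (PRE : (ruleEnc ρ).R.E → Bool) (PGE : st.GK.E → Bool),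
      (∀ (x : (ruleEnc ρ).R.E) (y : st.GK.E),
          GLHom.onE st.w x = GLHom.onE st.gR y → PRE x = PGE y) ∧
      (∀ x x', GLHom.onE st.w x = GLHom.onE st.w x' → PRE x = PRE x') ∧
      (∀ y y', GLHom.onE st.gR y = GLHom.onE st.gR y' → PGE y = PGE y') := by
    intro PRE PGE
    have comm : (ruleEnc ρ).r ≫ indE (ruleEnc ρ).R PRE = st.u ≫ indE st.GK PGE :=
      GLHom.ext' (funext fun k => rfl) (funext fun e => Empty.elim e)
    have h1 := st.po.inl_desc (indE _ PRE) (indE _ PGE) comm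
    have h2 := st.po.inr_desc (indE _ PRE) (indE _ PGE) comm
    refine ⟨fun x y hxy => ?_, fun x x' hxx => ?_, fun y y' hyy => ?_⟩
    · have e1 : GLHom.onE (st.po.desc (indE _ PRE) (indE _ PGE) comm)
          (GLHom.onE st.w x) = PRE x := hom_congr_onE h1 x
      have e2 : GLHom.onE (st.po.desc (indE _ PRE) (indE _ PGE) comm)
          (GLHom.onE st.gR y) = PGE y := hom_congr_onE h2 y
      rw [← e1, ← e2, hxy]
    · have e1 : GLHom.onE (st.po.desc (indE _ PRE) (indE _ PGE) comm)
          (GLHom.onE st.w x) = PRE x := hom_congr_onE h1 x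
      have e2 : GLHom.onE (st.po.desc (indE _ PRE) (indE _ PGE) comm)
          (GLHom.onE st.w x') = PRE x' := hom_congr_onE h1 x'
      rw [← e1, ← e2, hxx]
    · have e1 : GLHom.onE (st.po.desc (indE _ PRE) (indE _ PGE) comm)
          (GLHom.onE st.gR y) = PGE y := hom_congr_onE h2 y
      have e2 : GLHom.onE (st.po.desc (indE _ PRE) (indE _ PGE) comm)
          (GLHom.onE st.gR y') = PGE y' := hom_congr_onE h2 y'
      rw [← e1, ← e2, hyy]
  -- basic gluing facts
  have hwinjV : Function.Injective (GLHom.onV st.w) := by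
    intro x₁ x₂ h
    have hco : ∀ k : (ruleEnc ρ).K.V,
        (fun t => if t = x₁ then true else false) (GLHom.onV (ruleEnc ρ).r k) =
        (fun y₁ => if ∃ k', GLHom.onV st.u k' = y₁ ∧ GLHom.onV (ruleEnc ρ).r k' = x₁
          then true else false) (GLHom.onV st.u k) := by
      intro k
      show (if GLHom.onV (ruleEnc ρ).r k = x₁ then true else false) =
        (if ∃ k', GLHom.onV st.u k' = GLHom.onV st.u k ∧ GLHom.onV (ruleEnc ρ).r k' = x₁
          then true else false)
      by_cases hrk : GLHom.onV (ruleEnc ρ).r k = x₁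
      · rw [if_pos hrk, if_pos ⟨k, rfl, hrk⟩]
      · rw [if_neg hrk, if_neg]
        rintro ⟨k', hk'u, hk'r⟩
        exact hrk ((hu_injV hk'u) ▸ hk'r)
    have hPP := (sepV (fun t => if t = x₁ then true else false)
      (fun y₁ => if ∃ k', GLHom.onV st.u k' = y₁ ∧ GLHom.onV (ruleEnc ρ).r k' = x₁
        then true else false) hco).2.1 x₁ x₂ h
    by_cases hc : x₂ = x₁
    · exact hc.symm
    · exfalso
      have hPP2 : (if x₁ = x₁ then true else false) =
          (if x₂ = x₁ then true else false) := hPP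
      rw [if_pos rfl, if_neg hc] at hPP2
      exact Bool.noConfusion hPP2
  have hglue : ∀ (x : (ruleEnc ρ).R.V) (y : st.GK.V),
      GLHom.onV st.w x = GLHom.onV st.gR y →
      ∃ k, GLHom.onV st.u k = y ∧ GLHom.onV (ruleEnc ρ).r k = x := by
    intro x y hxy
    have hco : ∀ k : (ruleEnc ρ).K.V,
        (fun t => if t = x then true else false) (GLHom.onV (ruleEnc ρ).r k) =
        (fun y₁ => if ∃ k', GLHom.onV st.u k' = y₁ ∧ GLHom.onV (ruleEnc ρ).r k' = x
          then true else false) (GLHom.onV st.u k) := by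
      intro k
      show (if GLHom.onV (ruleEnc ρ).r k = x then true else false) =
        (if ∃ k', GLHom.onV st.u k' = GLHom.onV st.u k ∧ GLHom.onV (ruleEnc ρ).r k' = x
          then true else false)
      by_cases hrk : GLHom.onV (ruleEnc ρ).r k = x
      · rw [if_pos hrk, if_pos ⟨k, rfl, hrk⟩]
      · rw [if_neg hrk, if_neg]
        rintro ⟨k', hk'u, hk'r⟩
        exact hrk ((hu_injV hk'u) ▸ hk'r)
    have hPP := (sepV (fun t => if t = x then true else false)
      (fun y₁ => if ∃ k', GLHom.onV st.u k' = y₁ ∧ GLHom.onV (ruleEnc ρ).r k' = x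
        then true else false) hco).1 x y hxy
    have hPP2 : (if x = x then true else false) =
        (if ∃ k', GLHom.onV st.u k' = y ∧ GLHom.onV (ruleEnc ρ).r k' = x
          then true else false) := hPP
    rw [if_pos rfl] at hPP2
    by_contra hcon
    rw [if_neg hcon] at hPP2
    exact Bool.noConfusion hPP2
  have hglue2 : ∀ y y' : st.GK.V, GLHom.onV st.gR y = GLHom.onV st.gR y' →
      y = y' ∨ ∃ k k', GLHom.onV st.u k = y ∧ GLHom.onV st.u k' = y' ∧
        GLHom.onV (ruleEnc ρ).r k = GLHom.onV (ruleEnc ρ).r k' := by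
    intro y y' hyy
    by_cases hc : y = y'
    · exact Or.inl hc
    have hco : ∀ k : (ruleEnc ρ).K.V,
        (fun x₁ => if ∃ k₀, GLHom.onV (ruleEnc ρ).r k₀ = x₁ ∧
            (∃ k₂, GLHom.onV (ruleEnc ρ).r k₂ = GLHom.onV (ruleEnc ρ).r k₀ ∧
              GLHom.onV st.u k₂ = y) then true else false) (GLHom.onV (ruleEnc ρ).r k) =
        (fun y₁ => if y₁ = y ∨ ∃ k₀, GLHom.onV st.u k₀ = y₁ ∧
            (∃ k₂, GLHom.onV (ruleEnc ρ).r k₂ = GLHom.onV (ruleEnc ρ).r k₀ ∧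
              GLHom.onV st.u k₂ = y) then true else false) (GLHom.onV st.u k) := by
      intro k
      show (if ∃ k₀, GLHom.onV (ruleEnc ρ).r k₀ = GLHom.onV (ruleEnc ρ).r k ∧
            (∃ k₂, GLHom.onV (ruleEnc ρ).r k₂ = GLHom.onV (ruleEnc ρ).r k₀ ∧
              GLHom.onV st.u k₂ = y) then true else false) =
        (if GLHom.onV st.u k = y ∨ ∃ k₀, GLHom.onV st.u k₀ = GLHom.onV st.u k ∧
            (∃ k₂, GLHom.onV (ruleEnc ρ).r k₂ = GLHom.onV (ruleEnc ρ).r k₀ ∧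
              GLHom.onV st.u k₂ = y) then true else false)
      by_cases hPK : ∃ k₂, GLHom.onV (ruleEnc ρ).r k₂ = GLHom.onV (ruleEnc ρ).r k ∧
          GLHom.onV st.u k₂ = y
      · rw [if_pos ⟨k, rfl, hPK⟩, if_pos (Or.inr ⟨k, rfl, hPK⟩)]
      · have hnR : ¬ ∃ k₀, GLHom.onV (ruleEnc ρ).r k₀ = GLHom.onV (ruleEnc ρ).r k ∧
            (∃ k₂, GLHom.onV (ruleEnc ρ).r k₂ = GLHom.onV (ruleEnc ρ).r k₀ ∧
              GLHom.onV st.u k₂ = y) := by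
          rintro ⟨k₀, hk₀r, k₂, hk₂r, hk₂u⟩
          exact hPK ⟨k₂, hk₂r.trans hk₀r, hk₂u⟩
        have hnG : ¬ (GLHom.onV st.u k = y ∨ ∃ k₀, GLHom.onV st.u k₀ = GLHom.onV st.u k ∧
            (∃ k₂, GLHom.onV (ruleEnc ρ).r k₂ = GLHom.onV (ruleEnc ρ).r k₀ ∧
              GLHom.onV st.u k₂ = y)) := by
          rintro (h1 | ⟨k₀, hk₀u, k₂, hk₂r, hk₂u⟩)
          · exact hPK ⟨k, rfl, h1⟩
          · have hk := hu_injV hk₀u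
            rw [hk] at hk₂r
            exact hPK ⟨k₂, hk₂r, hk₂u⟩
        rw [if_neg hnR, if_neg hnG]
    have hPP := (sepV (fun x₁ => if ∃ k₀, GLHom.onV (ruleEnc ρ).r k₀ = x₁ ∧
            (∃ k₂, GLHom.onV (ruleEnc ρ).r k₂ = GLHom.onV (ruleEnc ρ).r k₀ ∧
              GLHom.onV st.u k₂ = y) then true else false)
      (fun y₁ => if y₁ = y ∨ ∃ k₀, GLHom.onV st.u k₀ = y₁ ∧
            (∃ k₂, GLHom.onV (ruleEnc ρ).r k₂ = GLHom.onV (ruleEnc ρ).r k₀ ∧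
              GLHom.onV st.u k₂ = y) then true else false) hco).2.2 y y' hyy
    have hPP2 : (if y = y ∨ ∃ k₀, GLHom.onV st.u k₀ = y ∧
            (∃ k₂, GLHom.onV (ruleEnc ρ).r k₂ = GLHom.onV (ruleEnc ρ).r k₀ ∧
              GLHom.onV st.u k₂ = y) then true else false) =
        (if y' = y ∨ ∃ k₀, GLHom.onV st.u k₀ = y' ∧
            (∃ k₂, GLHom.onV (ruleEnc ρ).r k₂ = GLHom.onV (ruleEnc ρ).r k₀ ∧
              GLHom.onV st.u k₂ = y) then true else false) := hPP
    rw [if_pos (Or.inl rfl)] at hPP2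
    by_cases hcon : y' = y ∨ ∃ k₀, GLHom.onV st.u k₀ = y' ∧
        (∃ k₂, GLHom.onV (ruleEnc ρ).r k₂ = GLHom.onV (ruleEnc ρ).r k₀ ∧
          GLHom.onV st.u k₂ = y)
    · rcases hcon with h1 | ⟨k₀, hk₀u, k₂, hk₂r, hk₂u⟩
      · exact absurd h1.symm hc
      · exact Or.inr ⟨k₂, k₀, hk₂u, hk₀u, hk₂r⟩
    · rw [if_neg hcon] at hPP2
      exact Bool.noConfusion hPP2
  have hdisjE : ∀ (x : (ruleEnc ρ).R.E) (y : st.GK.E),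
      GLHom.onE st.w x ≠ GLHom.onE st.gR y :=
    fun x y hxy =>
      Bool.noConfusion ((sepE (fun _ => true) (fun _ => false)).1 x y hxy)
  have hwinjE : Function.Injective (GLHom.onE st.w) := by
    intro x₁ x₂ h
    have hPP := (sepE (fun t => if t = x₁ then true else false) (fun _ => false)).2.1 x₁ x₂ h
    by_cases hc : x₂ = x₁
    · exact hc.symm
    · exfalso
      have hPP2 : (if x₁ = x₁ then true else false) =
          (if x₂ = x₁ then true else false) := hPP
      rw [if_pos rfl, if_neg hc] at hPP2
      exact Bool.noConfusion hPP2
  have hgRinjE : Function.Injective (GLHom.onE st.gR) := by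
    intro y₁ y₂ h
    have hPP := (sepE (fun _ => false) (fun t => if t = y₁ then true else false)).2.2 y₁ y₂ h
    by_cases hc : y₂ = y₁
    · exact hc.symm
    · exfalso
      have hPP2 : (if y₁ = y₁ then true else false) =
          (if y₂ = y₁ then true else false) := hPP
      rw [if_pos rfl, if_neg hc] at hPP2
      exact Bool.noConfusion hPP2
  -- joint surjectivity on vertices
  have hsurjV : ∀ z : H.V, (∃ x, GLHom.onV st.w x = z) ∨ (∃ y, GLHom.onV st.gR y = z) := by
    have h₀ : st.w ≫ indV H (fun z => if (∃ x, GLHom.onV st.w x = z) ∨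
        (∃ y, GLHom.onV st.gR y = z) then true else false) =
        st.w ≫ indV H (fun _ => true) := by
      refine GLHom.ext' (funext fun x => ?_) (funext fun e => ?_)
      · exact if_pos (Or.inl ⟨x, rfl⟩)
      · refine Prod.ext ?_ ?_
        · show (if _ then true else false) = true
          rw [st.w.src_comm e]
          exact if_pos (Or.inl ⟨_, rfl⟩)
        · show (if _ then true else false) = true
          rw [st.w.tgt_comm e]
          exact if_pos (Or.inl ⟨_, rfl⟩)
    have h₁ : st.gR ≫ indV H (fun z => if (∃ x, GLHom.onV st.w x = z) ∨
        (∃ y, GLHom.onV st.gR y = z) then true else false) =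
        st.gR ≫ indV H (fun _ => true) := by
      refine GLHom.ext' (funext fun y => ?_) (funext fun e => ?_)
      · exact if_pos (Or.inr ⟨y, rfl⟩)
      · refine Prod.ext ?_ ?_
        · show (if _ then true else false) = true
          rw [st.gR.src_comm e]
          exact if_pos (Or.inr ⟨_, rfl⟩)
        · show (if _ then true else false) = true
          rw [st.gR.tgt_comm e]
          exact if_pos (Or.inr ⟨_, rfl⟩)
    have hext := st.po.hom_ext h₀ h₁
    intro z
    have hz := hom_congr_onV hext z
    have hz2 : (if (∃ x, GLHom.onV st.w x = z) ∨ (∃ y, GLHom.onV st.gR y = z)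
        then true else false) = true := hz
    by_contra hcon
    rw [if_neg hcon] at hz2
    exact Bool.noConfusion hz2
  -- joint surjectivity on edges
  have hsurjE : ∀ e : H.E, (∃ x, GLHom.onE st.w x = e) ∨ (∃ y, GLHom.onE st.gR y = e) := by
    have h₀ : st.w ≫ indE H (fun e => if (∃ x, GLHom.onE st.w x = e) ∨
        (∃ y, GLHom.onE st.gR y = e) then true else false) =
        st.w ≫ indE H (fun _ => true) := by
      refine GLHom.ext' (funext fun x => rfl) (funext fun e => ?_)
      exact if_pos (Or.inl ⟨e, rfl⟩)
    have h₁ : st.gR ≫ indE H (fun e => if (∃ x, GLHom.onE st.w x = e) ∨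
        (∃ y, GLHom.onE st.gR y = e) then true else false) =
        st.gR ≫ indE H (fun _ => true) := by
      refine GLHom.ext' (funext fun y => rfl) (funext fun e => ?_)
      exact if_pos (Or.inr ⟨e, rfl⟩)
    have hext := st.po.hom_ext h₀ h₁
    intro e
    have hz := hom_congr_onE hext e
    have hz2 : (if (∃ x, GLHom.onE st.w x = e) ∨ (∃ y, GLHom.onE st.gR y = e)
        then true else false) = true := hz
    by_contra hcon
    rw [if_neg hcon] at hz2
    exact Bool.noConfusion hz2
  -- labels in H are bounded by the class supremum
  let supcV : H.V → FlatL S := fun z => supFlat {c | (∃ x, GLHom.onV st.w x = z ∧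
    (ruleEnc ρ).R.lV x = c) ∨ (∃ y, GLHom.onV st.gR y = z ∧ st.GK.lV y = c)}
  let supcE : H.E → FlatL S := fun e => supFlat {c | (∃ x, GLHom.onE st.w x = e ∧
    (ruleEnc ρ).R.lE x = c) ∨ (∃ y, GLHom.onE st.gR y = e ∧ st.GK.lE y = c)}
  let T₂ : LGraph (FlatL S) := ⟨H.V, H.E, H.src, H.tgt, supcV, supcE⟩
  let a₂ : (ruleEnc ρ).R ⟶ T₂ :=
    { onV := st.w.onV, onE := st.w.onE, src_comm := st.w.src_comm,
      tgt_comm := st.w.tgt_comm,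
      lV_le := fun x => le_supFlat (Or.inl ⟨x, rfl, rfl⟩),
      lE_le := fun e => le_supFlat (Or.inl ⟨e, rfl, rfl⟩) }
  let b₂ : st.GK ⟶ T₂ :=
    { onV := st.gR.onV, onE := st.gR.onE, src_comm := st.gR.src_comm,
      tgt_comm := st.gR.tgt_comm,
      lV_le := fun y => le_supFlat (Or.inr ⟨y, rfl, rfl⟩),
      lE_le := fun e => le_supFlat (Or.inr ⟨e, rfl, rfl⟩) }
  have ew2V := congrArg GLHom.onV st.po.w
  have ew2E := congrArg GLHom.onE st.po.w
  have comm₂ : (ruleEnc ρ).r ≫ a₂ = st.u ≫ b₂ := GLHom.ext' ew2V ew2E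
  have hdesc2V : ∀ z, GLHom.onV (st.po.desc a₂ b₂ comm₂) z = z := by
    intro z
    rcases hsurjV z with ⟨x, hx⟩ | ⟨y, hy⟩
    · rw [← hx]
      exact hom_congr_onV (st.po.inl_desc a₂ b₂ comm₂) x
    · rw [← hy]
      exact hom_congr_onV (st.po.inr_desc a₂ b₂ comm₂) y
  have hdesc2E : ∀ e, GLHom.onE (st.po.desc a₂ b₂ comm₂) e = e := by
    intro e
    rcases hsurjE e with ⟨x, hx⟩ | ⟨y, hy⟩
    · rw [← hx]
      exact hom_congr_onE (st.po.inl_desc a₂ b₂ comm₂) x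
    · rw [← hy]
      exact hom_congr_onE (st.po.inr_desc a₂ b₂ comm₂) y
  have hlVbound : ∀ z, H.lV z ≤ supcV z := by
    intro z
    have h1 := (st.po.desc a₂ b₂ comm₂).lV_le z
    rw [hdesc2V z] at h1
    exact h1
  have hlEbound : ∀ e, H.lE e ≤ supcE e := by
    intro e
    have h1 := (st.po.desc a₂ b₂ comm₂).lE_le e
    rw [hdesc2E e] at h1
    exact h1
  -- the relabeled pushout legs
  let w' : (ruleEnc ρ).R ⟶ relabelSet H Uset l :=
    { onV := st.w.onV, onE := st.w.onE, src_comm := st.w.src_comm,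
      tgt_comm := st.w.tgt_comm, lE_le := st.w.lE_le,
      lV_le := by
        intro x
        show (ruleEnc ρ).R.lV x ≤
          (if GLHom.onV st.w x ∈ Uset then l else H.lV (GLHom.onV st.w x))
        by_cases hxU : GLHom.onV st.w x ∈ Uset
        · rw [if_pos hxU]
          obtain ⟨y₀, hy₀v, hy₀R⟩ := hxU
          obtain ⟨k, hku, hkr⟩ := hglue x y₀ hy₀R.symm
          obtain ⟨xv, hxv⟩ := hkv k (by rw [← hugL k, hku]; exact hy₀v)
          have hrk : GLHom.onV (ruleEnc ρ).r k = Sum.inr xv := by rw [hxv]; rfl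
          rw [← hkr, hrk]
          exact Flat.bot_le l
        · rw [if_neg hxU]
          exact st.w.lV_le x }
  let gR' : GK' ⟶ relabelSet H Uset l :=
    { onV := st.gR.onV, onE := st.gR.onE, src_comm := st.gR.src_comm,
      tgt_comm := st.gR.tgt_comm, lE_le := st.gR.lE_le,
      lV_le := by
        intro y
        show (if y ∈ Y then l else st.GK.lV y) ≤
          (if GLHom.onV st.gR y ∈ Uset then l else H.lV (GLHom.onV st.gR y))
        by_cases hy : y ∈ Y
        · rw [if_pos hy, if_pos ⟨y, hy, rfl⟩]
        · rw [if_neg hy]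
          by_cases hU2 : GLHom.onV st.gR y ∈ Uset
          · rw [if_pos hU2]
            obtain ⟨y₂, hy₂v, hy₂R⟩ := hU2
            rcases hglue2 y y₂ hy₂R.symm with heq | ⟨k, k', hku, hk'u, hrkk'⟩
            · exfalso
              apply hy
              show GLHom.onV st.gL y = v
              rw [heq]
              exact hy₂v
            · obtain ⟨xv, hxv⟩ := hkv k' (by rw [← hugL k', hk'u]; exact hy₂v)
              rcases k with xk | uu
              · exfalso
                have h5 : (Sum.inr xk : ρ.rhs.encV) = Sum.inr xv := by
                  have h5' := hrkk'
                  rw [hxv] at h5'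
                  exact h5'
                have h6 : xk = xv := Sum.inr_injective h5
                apply hy
                show GLHom.onV st.gL y = v
                have hyy2 : y = y₂ := by
                  rw [← hku, ← hk'u, hxv, h6]
                rw [hyy2]
                exact hy₂v
              · have h8 : st.GK.lV y = Flat.bot := by
                  rw [← hku]
                  exact hGKroot uu
                rw [h8]
                exact Flat.bot_le l
          · rw [if_neg hU2]
            exact st.gR.lV_le y }
  -- the pushout square for the relabeled graphs
  have ew3V := congrArg GLHom.onV st.po.w
  have ew3E := congrArg GLHom.onE st.po.w
  have eqpo : (ruleEnc ρ).r ≫ w' = u₂ ≫ gR' := GLHom.ext' ew3V ew3E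
  let cV : st.GK.V → GK'.V := fun z => z
  let cE : st.GK.E → GK'.E := fun z => z
  have hpackV : ∀ (s : Limits.PushoutCocone (ruleEnc ρ).r u₂) (z : H.V), ∃ t : s.pt.V,
      (∀ x, GLHom.onV st.w x = z → t = GLHom.onV s.inl x) ∧
      (∀ y, GLHom.onV st.gR y = z → t = GLHom.onV s.inr (cV y)) := by
    intro s z
    have scomm : ∀ k : (ruleEnc ρ).K.V,
        GLHom.onV s.inl (GLHom.onV (ruleEnc ρ).r k) =
        GLHom.onV s.inr (cV (GLHom.onV st.u k)) :=
      fun k => hom_congr_onV s.condition k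
    rcases hsurjV z with ⟨x₀, hx₀⟩ | ⟨y₀, hy₀⟩
    · refine ⟨GLHom.onV s.inl x₀, ?_, ?_⟩
      · intro x hx
        exact congrArg _ (hwinjV (hx₀.trans hx.symm))
      · intro y hy
        obtain ⟨k, hku, hkr⟩ := hglue x₀ y (hx₀.trans hy.symm)
        rw [← hkr, ← hku]
        exact scomm k
    · refine ⟨GLHom.onV s.inr (cV y₀), ?_, ?_⟩
      · intro x hx
        obtain ⟨k, hku, hkr⟩ := hglue x y₀ (hx.trans hy₀.symm)
        rw [← hku, ← hkr]
        exact (scomm k).symm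
      · intro y hy
        rcases hglue2 y₀ y (hy₀.trans hy.symm) with heq | ⟨k, k', hku, hk'u, hrkk'⟩
        · rw [heq]
        · rw [← hku, ← hk'u, ← scomm k, ← scomm k', hrkk']
  have hpackE : ∀ (s : Limits.PushoutCocone (ruleEnc ρ).r u₂) (e : H.E), ∃ t : s.pt.E,
      (∀ x, GLHom.onE st.w x = e → t = GLHom.onE s.inl x) ∧
      (∀ y, GLHom.onE st.gR y = e → t = GLHom.onE s.inr (cE y)) := by
    intro s e
    rcases hsurjE e with ⟨x₀, hx₀⟩ | ⟨y₀, hy₀⟩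
    · refine ⟨GLHom.onE s.inl x₀, ?_, ?_⟩
      · intro x hx
        exact congrArg _ (hwinjE (hx₀.trans hx.symm))
      · intro y hy
        exact absurd (hx₀.trans hy.symm) (hdisjE x₀ y)
    · refine ⟨GLHom.onE s.inr (cE y₀), ?_, ?_⟩
      · intro x hx
        exact absurd (hx.trans hy₀.symm) (hdisjE x y₀)
      · intro y hy
        exact congrArg _ (congrArg cE (hgRinjE (hy₀.trans hy.symm)))
  let descHom : ∀ s : Limits.PushoutCocone (ruleEnc ρ).r u₂,
      relabelSet H Uset l ⟶ s.pt := fun s =>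
    { onV := fun z => (hpackV s z).choose
      onE := fun e => (hpackE s e).choose
      src_comm := by
        intro e
        show s.pt.src (hpackE s e).choose = (hpackV s (H.src e)).choose
        rcases hsurjE e with ⟨x, hx⟩ | ⟨y, hy⟩
        · rw [(hpackE s e).choose_spec.1 x hx,
            (hpackV s (H.src e)).choose_spec.1 ((ruleEnc ρ).R.src x)
              (by rw [← hx]; exact (st.w.src_comm x).symm)]
          exact GLHom.src_comm s.inl x
        · rw [(hpackE s e).choose_spec.2 y hy,
            (hpackV s (H.src e)).choose_spec.2 (st.GK.src y)
              (by rw [← hy]; exact (st.gR.src_comm y).symm)]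
          exact GLHom.src_comm s.inr (cE y)
      tgt_comm := by
        intro e
        show s.pt.tgt (hpackE s e).choose = (hpackV s (H.tgt e)).choose
        rcases hsurjE e with ⟨x, hx⟩ | ⟨y, hy⟩
        · rw [(hpackE s e).choose_spec.1 x hx,
            (hpackV s (H.tgt e)).choose_spec.1 ((ruleEnc ρ).R.tgt x)
              (by rw [← hx]; exact (st.w.tgt_comm x).symm)]
          exact GLHom.tgt_comm s.inl x
        · rw [(hpackE s e).choose_spec.2 y hy,
            (hpackV s (H.tgt e)).choose_spec.2 (st.GK.tgt y)
              (by rw [← hy]; exact (st.gR.tgt_comm y).symm)]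
          exact GLHom.tgt_comm s.inr (cE y)
      lV_le := by
        intro z
        show (if z ∈ Uset then l else H.lV z) ≤ s.pt.lV (hpackV s z).choose
        by_cases hzU : z ∈ Uset
        · rw [if_pos hzU]
          obtain ⟨y₀, hy₀v, hy₀R⟩ := hzU
          rw [(hpackV s z).choose_spec.2 y₀ hy₀R]
          have h2 := GLHom.lV_le s.inr (cV y₀)
          have h3 : GK'.lV (cV y₀) = l := by
            show (if y₀ ∈ Y then l else st.GK.lV y₀) = l
            rw [if_pos (show y₀ ∈ Y from hy₀v)]
          rw [h3] at h2
          exact h2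
        · rw [if_neg hzU]
          refine le_trans (hlVbound z) (supFlat_le ?_)
          rintro c (⟨x, hx, rfl⟩ | ⟨y, hy, rfl⟩)
          · rw [(hpackV s z).choose_spec.1 x hx]
            exact GLHom.lV_le s.inl x
          · have hyY : y ∉ Y := fun hyY => hzU ⟨y, hyY, hy⟩
            rw [(hpackV s z).choose_spec.2 y hy]
            have h2 := GLHom.lV_le s.inr (cV y)
            have h3 : GK'.lV (cV y) = st.GK.lV y := by
              show (if y ∈ Y then l else st.GK.lV y) = _
              rw [if_neg hyY]
            rw [h3] at h2
            exact h2
      lE_le := by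
        intro e
        show H.lE e ≤ s.pt.lE (hpackE s e).choose
        refine le_trans (hlEbound e) (supFlat_le ?_)
        rintro c (⟨x, hx, rfl⟩ | ⟨y, hy, rfl⟩)
        · rw [(hpackE s e).choose_spec.1 x hx]
          exact GLHom.lE_le s.inl x
        · rw [(hpackE s e).choose_spec.2 y hy]
          exact GLHom.lE_le s.inr (cE y) }
  have po' : IsPushout (ruleEnc ρ).r u₂ w' gR' := by
    refine IsPushout.of_isColimit (Limits.PushoutCocone.IsColimit.mk eqpo descHom
      (fun s => GLHom.ext' (funext fun x => (hpackV s _).choose_spec.1 x rfl)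
        (funext fun x => (hpackE s _).choose_spec.1 x rfl))
      (fun s => GLHom.ext' (funext fun y => (hpackV s _).choose_spec.2 y rfl)
        (funext fun y => (hpackE s _).choose_spec.2 y rfl))
      (fun s mm h1 h2 => ?_))
    refine GLHom.ext' (funext fun z => ?_) (funext fun e => ?_)
    · rcases hsurjV z with ⟨x, hx⟩ | ⟨y, hy⟩
      · rw [← hx]
        have e1 := hom_congr_onV h1 x
        exact e1.trans ((hpackV s _).choose_spec.1 x rfl).symm
      · rw [← hy]
        have e1 := hom_congr_onV h2 y
        exact e1.trans ((hpackV s _).choose_spec.2 y rfl).symm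
    · rcases hsurjE e with ⟨x, hx⟩ | ⟨y, hy⟩
      · rw [← hx]
        have e1 := hom_congr_onE h1 x
        exact e1.trans ((hpackE s _).choose_spec.1 x rfl).symm
      · rw [← hy]
        have e1 := hom_congr_onE h2 y
        exact e1.trans ((hpackE s _).choose_spec.2 y rfl).symm
  -- assemble the rewrite step
  have euV := congrArg GLHom.onV st.u_u'
  have euE := congrArg GLHom.onE st.u_u'
  have u_u'2 : u₂ ≫ u'' = (ruleEnc ρ).tK := GLHom.ext' euV euE
  have egV := congrArg GLHom.onV st.u_gL
  have egE := congrArg GLHom.onE st.u_gL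
  have u_gL2 : u₂ ≫ gL' = (ruleEnc ρ).l ≫ m' := GLHom.ext' egV egE
  have mono' : Mono m' :=
    mono_of_inj m' (injV_of_mono st.m st.mono_m) (injE_of_mono st.m st.mono_m)
  exact ⟨⟨m', mono', α', matchPB', GK', gL', u'', pbK', u₂, u_u'2, u_gL2, w', gR', po'⟩,
    rfl, rfl⟩
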